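/- arXiv:2011.13599 — 11 statements merged into one kernel-verified Lean document; each statement's English description precedes it below -/
import Mathlib

section
/- Let P and Q be nonempty finite subsets of ℤ and (φ, ψ) a Galois connection between P and Q. Let d ∈ Q with d ≠ min(Q), and let v = max{b ∈ Q : b ≤ d - 1}. Then for any a ∈ P, d = φ(a) if and only if ψ(v) + 1 ≤ a ≤ ψ(d). -/
/-- Let `(φ, ψ)` be a Galois connection between nonempty finite subsets `P`, `Q`
of `ℤ`.  Let `d ∈ Q` with `d ≠ min Q`, and let `v` be the maximum of
`{b ∈ Q : b ≤ d - 1}`.  Then for any `a ∈ P`, `d = φ a ↔ ψ v + 1 ≤ a ≤ ψ d`. -/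
theorem stmt_1 (P Q : Finset ℤ) (hP : P.Nonempty) (hQ : Q.Nonempty)
    (φ ψ : ℤ → ℤ)
    (hφmem : ∀ a ∈ P, φ a ∈ Q) (hψmem : ∀ b ∈ Q, ψ b ∈ P)
    (hφmono : ∀ a ∈ P, ∀ a' ∈ P, a ≤ a' → φ a ≤ φ a')
    (hψmono : ∀ b ∈ Q, ∀ b' ∈ Q, b ≤ b' → ψ b ≤ ψ b')
    (hadj : ∀ a ∈ P, ∀ b ∈ Q, (a ≤ ψ b ↔ φ a ≤ b))
    (d : ℤ) (hd : d ∈ Q) (hdmin : d ≠ Q.min' hQ)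
    (v : ℤ) (hv : IsGreatest {b | b ∈ Q ∧ b ≤ d - 1} v) :
    ∀ a ∈ P, (d = φ a ↔ ψ v + 1 ≤ a ∧ a ≤ ψ d) := by
  obtain ⟨⟨hvQ, hvd⟩, hvmax⟩ := hv
  intro a ha
  constructor
  · intro hda
    refine ⟨?_, (hadj a ha d hd).mpr (hda ▸ le_refl _)⟩
    by_contra h
    push_neg at h
    have : φ a ≤ v := (hadj a ha v hvQ).mp (by omega)
    omega
  · rintro ⟨h1, h2⟩
    have hfa : φ a ≤ d := (hadj a ha d hd).mp h2
    by_contra hne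
    have hlt : φ a ≤ d - 1 := by
      rcases lt_or_eq_of_le hfa with h | h
      · omega
      · exact absurd h.symm hne
    have hle : φ a ≤ v := hvmax ⟨hφmem a ha, hlt⟩
    have : a ≤ ψ v := (hadj a ha v hvQ).mpr hle
    omega
end

section
/- Let C be a k-dimensional linear code of length m over a field 𝔽. Define φ: [0,k] → [0,m] by φ(r) = d_r(C), the r-th generalized Hamming weight, and ψ: [0,m] → [0,k] by ψ(l) = K_l(C), the l-th dimension/length profile. Then (φ, ψ) is a Galois connection between [0,k] and [0,m]. -/
/-- The submodule `δ(J)` of vectors supported inside `J`. -/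
def deltaCode (𝔽 : Type*) [Field 𝔽] (m : ℕ) (J : Finset (Fin m)) :
    Submodule 𝔽 (Fin m → 𝔽) :=
  Submodule.pi {i | i ∉ J} (fun _ => ⊥)

/-- The `r`-th generalized Hamming weight of a linear code `C ⊆ 𝔽^m`:
`d_r(C) = min {|J| : r ≤ dim (C ∩ δ(J))}`. -/
noncomputable def GHW (𝔽 : Type*) [Field 𝔽] (m : ℕ) (C : Submodule 𝔽 (Fin m → 𝔽))
    (r : ℕ) : ℕ :=
  sInf {n | ∃ J : Finset (Fin m), J.card = n ∧
    r ≤ Module.finrank 𝔽 ↥(C ⊓ deltaCode 𝔽 m J)}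

/-- The `l`-th dimension/length profile of a linear code `C ⊆ 𝔽^m`:
`K_l(C) = max {dim (C ∩ δ(J)) : |J| = l}`. -/
noncomputable def DLP (𝔽 : Type*) [Field 𝔽] (m : ℕ) (C : Submodule 𝔽 (Fin m → 𝔽))
    (l : ℕ) : ℕ :=
  sSup {d | ∃ J : Finset (Fin m), J.card = l ∧
    Module.finrank 𝔽 ↥(C ⊓ deltaCode 𝔽 m J) = d}


section aux
variable (𝔽 : Type*) [Field 𝔽] (m : ℕ)

lemma deltaCode_mono {J J' : Finset (Fin m)} (h : J ⊆ J') :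
    deltaCode 𝔽 m J ≤ deltaCode 𝔽 m J' := by
  intro x hx
  rw [deltaCode, Submodule.mem_pi] at hx ⊢
  intro i hi
  exact hx i (fun hiJ => hi (h hiJ))

lemma finrank_inter_le (C : Submodule 𝔽 (Fin m → 𝔽)) (J : Finset (Fin m)) :
    Module.finrank 𝔽 ↥(C ⊓ deltaCode 𝔽 m J) ≤ Module.finrank 𝔽 C :=
  Submodule.finrank_mono inf_le_left

lemma deltaCode_univ : deltaCode 𝔽 m (Finset.univ) = ⊤ := by
  ext x
  simp [deltaCode, Submodule.mem_pi]

end aux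

/-- For a `k`-dimensional linear code `C` of length `m` over a field `𝔽`, the
maps `r ↦ d_r(C)` and `l ↦ K_l(C)` form a Galois connection between `[0,k]`
and `[0,m]`. -/
theorem stmt_4 (𝔽 : Type*) [Field 𝔽] (m k : ℕ)
    (C : Submodule 𝔽 (Fin m → 𝔽)) (hk : Module.finrank 𝔽 C = k) :
    (∀ r ≤ k, GHW 𝔽 m C r ≤ m) ∧
    (∀ l ≤ m, DLP 𝔽 m C l ≤ k) ∧
    (∀ r r' : ℕ, r ≤ r' → r' ≤ k → GHW 𝔽 m C r ≤ GHW 𝔽 m C r') ∧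
    (∀ l l' : ℕ, l ≤ l' → l' ≤ m → DLP 𝔽 m C l ≤ DLP 𝔽 m C l') ∧
    (∀ r ≤ k, ∀ l ≤ m, (r ≤ DLP 𝔽 m C l ↔ GHW 𝔽 m C r ≤ l)) := by
  classical
  have haveFin : ∀ J : Finset (Fin m),
      Module.finrank 𝔽 ↥(C ⊓ deltaCode 𝔽 m J) ≤ k := by
    intro J; rw [← hk]; exact finrank_inter_le 𝔽 m C J
  -- the DLP set
  set f : Finset (Fin m) → ℕ := fun J => Module.finrank 𝔽 ↥(C ⊓ deltaCode 𝔽 m J) with hf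
  have hfmono : ∀ {J J' : Finset (Fin m)}, J ⊆ J' → f J ≤ f J' := by
    intro J J' h
    exact Submodule.finrank_mono (inf_le_inf_left C (deltaCode_mono 𝔽 m h))
  have hfuniv : f Finset.univ = k := by
    show Module.finrank 𝔽 ↥(C ⊓ deltaCode 𝔽 m Finset.univ) = k
    rw [deltaCode_univ, inf_top_eq, hk]
  have hbdd : ∀ l, BddAbove {d | ∃ J : Finset (Fin m), J.card = l ∧ f J = d} := by
    intro l
    exact ⟨k, by rintro d ⟨J, -, rfl⟩; exact haveFin J⟩
  have hne : ∀ l ≤ m, {d | ∃ J : Finset (Fin m), J.card = l ∧ f J = d}.Nonempty := by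
    intro l hl
    obtain ⟨J, -, hJ⟩ := Finset.exists_subset_card_eq (s := (Finset.univ : Finset (Fin m))) (n := l)
      (by simpa using hl)
    exact ⟨f J, J, hJ, rfl⟩
  have hGHW_le : ∀ r ≤ k, GHW 𝔽 m C r ≤ m := by
    intro r hr
    apply Nat.sInf_le
    exact ⟨Finset.univ, by simp, by rw [show Module.finrank 𝔽 ↥(C ⊓ deltaCode 𝔽 m Finset.univ) = f Finset.univ from rfl, hfuniv]; exact hr⟩
  have hDLP_le : ∀ l ≤ m, DLP 𝔽 m C l ≤ k := by
    intro l hl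
    apply csSup_le (hne l hl)
    rintro d ⟨J, -, rfl⟩; exact haveFin J
  have hDLP_mono : ∀ l l' : ℕ, l ≤ l' → l' ≤ m → DLP 𝔽 m C l ≤ DLP 𝔽 m C l' := by
    intro l l' hll hl'
    have hl : l ≤ m := le_trans hll hl'
    apply csSup_le (hne l hl)
    rintro d ⟨J, hJ, rfl⟩
    obtain ⟨J', hJJ', hJ'⟩ := Finset.exists_superset_card_eq (by omega : J.card ≤ l')
      (by simpa using hl')
    exact le_trans (hfmono hJJ') (le_csSup (hbdd l') ⟨J', hJ', rfl⟩)
  refine ⟨hGHW_le, hDLP_le, ?_, hDLP_mono, ?_⟩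
  · intro r r' hrr hr'
    have hne' : {n | ∃ J : Finset (Fin m), J.card = n ∧ r' ≤ f J}.Nonempty :=
      ⟨m, Finset.univ, by simp, by rw [hfuniv]; exact hr'⟩
    obtain ⟨J, hJ, hrJ⟩ := Nat.sInf_mem hne'
    exact Nat.sInf_le ⟨J, hJ, le_trans hrr hrJ⟩
  · intro r hr l hl
    constructor
    · intro h
      obtain ⟨J, hJ, hfJ⟩ := Nat.sSup_mem (hne l hl) (hbdd l)
      exact Nat.sInf_le ⟨J, hJ, by rw [show Module.finrank 𝔽 ↥(C ⊓ deltaCode 𝔽 m J) = f J from rfl, hfJ]; exact h⟩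
    · intro h
      have hne' : {n | ∃ J : Finset (Fin m), J.card = n ∧ r ≤ f J}.Nonempty :=
        ⟨m, Finset.univ, by simp, by rw [hfuniv]; exact hr⟩
      obtain ⟨J, hJ, hrJ⟩ := Nat.sInf_mem hne'
      have hcard : J.card ≤ l := by rw [hJ]; exact h
      obtain ⟨J', hJJ', hJ'⟩ := Finset.exists_superset_card_eq hcard (by simpa using hl)
      calc r ≤ f J := hrJ
        _ ≤ f J' := hfmono hJJ'
        _ ≤ DLP 𝔽 m C l := le_csSup (hbdd l) ⟨J', hJ', rfl⟩
end

section
/- Let k, m ∈ ℕ, w ∈ ℤ⁺, and let (φ, ψ) be a Galois connection between [0,k] and [0,m] with ψ(0) = 0 and ψ(l) - ψ(l-1) ≤ w for all l ∈ [1,m]. Define η(l) = ψ(m-l) + wl - k, and define τ: [0, wm-k] → [0,m] by τ(a) = min{b ∈ [0,m] : a ≤ η(b)}. Then (τ, η) is a Galois connection between [0, wm-k] and [0,m], and for any u ∈ [0,k], v ∈ [0, wm-k] with φ(u) + τ(v) = m + 1, it holds that u ≢ v + k (mod w). -/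
/-- A Galois connection between the integer intervals `[0,k]` and `[0,m]`. -/
def IsGC (k m : ℤ) (φ ψ : ℤ → ℤ) : Prop :=
  (∀ a, 0 ≤ a → a ≤ k → 0 ≤ φ a ∧ φ a ≤ m) ∧
  (∀ b, 0 ≤ b → b ≤ m → 0 ≤ ψ b ∧ ψ b ≤ k) ∧
  (∀ a a', 0 ≤ a → a ≤ a' → a' ≤ k → φ a ≤ φ a') ∧
  (∀ b b', 0 ≤ b → b ≤ b' → b' ≤ m → ψ b ≤ ψ b') ∧
  (∀ a b, 0 ≤ a → a ≤ k → 0 ≤ b → b ≤ m → (a ≤ ψ b ↔ φ a ≤ b))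

/-- Lemma 2.3(3): with `η l = ψ (m - l) + w l - k` and
`τ a = min {b ∈ [0,m] : a ≤ η b}`, the pair `(τ, η)` is a Galois connection
between `[0, wm - k]` and `[0,m]`, and whenever `φ u + τ v = m + 1` with
`u ∈ [0,k]`, `v ∈ [0, wm-k]`, one has `u ≢ v + k (mod w)`. -/
theorem stmt_6 (k m w : ℤ) (hk : 0 ≤ k) (hm : 0 ≤ m) (hw : 1 ≤ w)
    (φ ψ : ℤ → ℤ) (hgc : IsGC k m φ ψ) (hψ0 : ψ 0 = 0)
    (hstep : ∀ l, 1 ≤ l → l ≤ m → ψ l - ψ (l - 1) ≤ w)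
    (η : ℤ → ℤ) (hη : ∀ l, η l = ψ (m - l) + w * l - k)
    (τ : ℤ → ℤ)
    (hτ : ∀ a, 0 ≤ a → a ≤ w * m - k →
      IsLeast {b | 0 ≤ b ∧ b ≤ m ∧ a ≤ η b} (τ a)) :
    IsGC (w * m - k) m τ η ∧
    ∀ u v, 0 ≤ u → u ≤ k → 0 ≤ v → v ≤ w * m - k →
      φ u + τ v = m + 1 → ¬ (u ≡ v + k [ZMOD w]) := by
  obtain ⟨hφmap, hψmap, hφmono, hψmono, hadj⟩ := hgc
  -- ψ m = k
  have hψm : ψ m = k := by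
    have h1 : ψ m ≤ k := (hψmap m hm le_rfl).2
    have h2 : k ≤ ψ m := (hadj k m hk le_rfl hm le_rfl).2 (hφmap k hk le_rfl).2
    omega
  -- telescoping: ψ (l + d) ≤ ψ l + w * d
  have htel : ∀ d : ℕ, ∀ l : ℤ, 0 ≤ l → l + d ≤ m → ψ (l + d) ≤ ψ l + w * d := by
    intro d
    induction d with
    | zero => intro l _ _; simp
    | succ n ih =>
      intro l hl0 hlm
      have h1 : ψ (l + n) ≤ ψ l + w * n := ih l hl0 (by push_cast at hlm ⊢; omega)
      have h2 : ψ (l + n + 1) - ψ (l + n + 1 - 1) ≤ w :=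
        hstep (l + n + 1) (by omega) (by push_cast at hlm ⊢; omega)
      have : (l + (n + 1 : ℕ) : ℤ) = l + n + 1 := by push_cast; ring
      rw [this]
      have : (l + n + 1 - 1 : ℤ) = l + n := by ring
      rw [this] at h2
      push_cast
      linarith
  -- η is monotone on [0, m]
  have hηmono : ∀ b b', 0 ≤ b → b ≤ b' → b' ≤ m → η b ≤ η b' := by
    intro b b' hb0 hbb' hb'm
    rw [hη, hη]
    have hd : (0 : ℤ) ≤ b' - b := by omega
    obtain ⟨d, hd⟩ := Int.eq_ofNat_of_zero_le hd
    have := htel d (m - b') (by omega) (by omega)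
    have he : m - b' + (d : ℤ) = m - b := by omega
    rw [he] at this
    nlinarith [this]
  -- η bounds
  have hη0 : η 0 = 0 := by rw [hη]; simp [hψm]
  have hηm : η m = w * m - k := by rw [hη]; simp [hψ0]
  have hηbd : ∀ b, 0 ≤ b → b ≤ m → 0 ≤ η b ∧ η b ≤ w * m - k := by
    intro b hb0 hbm
    constructor
    · rw [← hη0]; exact hηmono 0 b le_rfl hb0 hbm
    · rw [← hηm]; exact hηmono b m hb0 hbm le_rfl
  -- τ facts
  have hτmem : ∀ a, 0 ≤ a → a ≤ w * m - k → 0 ≤ τ a ∧ τ a ≤ m ∧ a ≤ η (τ a) :=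
    fun a h0 h1 => (hτ a h0 h1).1
  have hτlb : ∀ a, 0 ≤ a → a ≤ w * m - k → ∀ b, 0 ≤ b → b ≤ m → a ≤ η b → τ a ≤ b :=
    fun a h0 h1 b hb0 hbm hab => (hτ a h0 h1).2 ⟨hb0, hbm, hab⟩
  -- adjunction for (τ, η)
  have hadj' : ∀ a b, 0 ≤ a → a ≤ w * m - k → 0 ≤ b → b ≤ m → (a ≤ η b ↔ τ a ≤ b) := by
    intro a b ha0 ha1 hb0 hbm
    constructor
    · exact hτlb a ha0 ha1 b hb0 hbm
    · intro h
      obtain ⟨h1, h2, h3⟩ := hτmem a ha0 ha1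
      exact le_trans h3 (hηmono _ b h1 h hbm)
  constructor
  · refine ⟨?_, ?_, ?_, ?_, hadj'⟩
    · intro a h0 h1
      obtain ⟨x, y, z⟩ := hτmem a h0 h1
      exact ⟨x, y⟩
    · exact hηbd
    · intro a a' h0 haa' h1
      obtain ⟨x, y, z⟩ := hτmem a' (by omega) h1
      exact hτlb a h0 (by omega) (τ a') x y (le_trans haa' z)
    · exact hηmono
  · intro u v hu0 huk hv0 hv1 hsum hmod
    have hdvd : w ∣ (v + k) - u := Int.ModEq.dvd hmod
    obtain ⟨c, hc⟩ := hdvd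
    set p := φ u with hp
    obtain ⟨hp0, hpm⟩ := hφmap u hu0 huk
    obtain ⟨hτ0, hτm, hτη⟩ := hτmem v hv0 hv1
    have hp1 : 1 ≤ p := by omega
    -- η (m - p) < v
    have h1 : η (m - p) < v := by
      by_contra h
      push_neg at h
      have := hτlb v hv0 hv1 (m - p) (by omega) (by omega) h
      omega
    -- v ≤ η (m + 1 - p)
    have h2 : v ≤ η (m + 1 - p) := by
      have : τ v = m + 1 - p := by omega
      rwa [this] at hτη
    rw [hη] at h1 h2
    have e1 : m - (m - p) = p := by ring
    have e2 : m - (m + 1 - p) = p - 1 := by ring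
    rw [e1] at h1
    rw [e2] at h2
    -- u ≤ ψ p and ψ (p-1) < u
    have h3 : u ≤ ψ p := (hadj u p hu0 huk hp0 hpm).2 le_rfl
    have h4 : ψ (p - 1) < u := by
      by_contra h
      push_neg at h
      have := (hadj u (p - 1) hu0 huk (by omega) (by omega)).1 h
      omega
    have h5 : ψ p - ψ (p - 1) ≤ w := hstep p hp1 hpm
    -- contradiction via divisibility
    set d := c - (m - p) with hd
    have hcd : v + k - u = w * (m - p) + w * d := by rw [hd]; linear_combination hc
    have hwd : 0 < w * d := by nlinarith [h1, h3, hcd]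
    have hdpos : 1 ≤ d := by nlinarith
    have : w ≤ w * d := le_mul_of_one_le_right (by omega) hdpos
    nlinarith [h2, h4, hcd]
end

section
/- Let k, m ∈ ℕ, w ∈ ℤ⁺, and (φ, ψ) a Galois connection between [0,k] and [0,m]. Then the following are equivalent: (1) ψ(l) - ψ(l-1) ≤ w for all l ∈ [1,m]; (2) |φ⁻¹({l})| ≤ w for all l ∈ [1,m]; (3) φ(r) + 1 ≤ max{φ(r+w), 1} for all r ∈ [0, k-w]. -/
/-- Proposition 2.1: for a Galois connection `(φ,ψ)` between `[0,k]` and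
`[0,m]` the following are equivalent: (1) `ψ l - ψ (l-1) ≤ w` for all
`l ∈ [1,m]`; (2) `|φ⁻¹({l})| ≤ w` for all `l ∈ [1,m]` (preimage within the
domain `[0,k]`); (3) `φ r + 1 ≤ max (φ (r+w)) 1` for all `r ∈ [0, k-w]`. -/
theorem stmt_7 (k m w : ℤ) (hk : 0 ≤ k) (hm : 0 ≤ m) (hw : 1 ≤ w)
    (φ ψ : ℤ → ℤ) (hgc : IsGC k m φ ψ) :
    ((∀ l, 1 ≤ l → l ≤ m → ψ l - ψ (l - 1) ≤ w) ↔
      (∀ l, 1 ≤ l → l ≤ m →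
        (((Finset.Icc (0 : ℤ) k).filter (fun a => φ a = l)).card : ℤ) ≤ w)) ∧
    ((∀ l, 1 ≤ l → l ≤ m → ψ l - ψ (l - 1) ≤ w) ↔
      (∀ r, 0 ≤ r → r ≤ k - w → φ r + 1 ≤ max (φ (r + w)) 1)) := by
  obtain ⟨hφ, hψ, hφmono, hψmono, hadj⟩ := hgc
  -- key: the fiber is an Ioc interval
  have key : ∀ l, 1 ≤ l → l ≤ m →
      (((Finset.Icc (0 : ℤ) k).filter (fun a => φ a = l)).card : ℤ)
        = ψ l - ψ (l - 1) := by
    intro l hl1 hlm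
    have hψl := hψ l (by omega) hlm
    have hψl1 := hψ (l - 1) (by omega) (by omega)
    have hfe : (Finset.Icc (0 : ℤ) k).filter (fun a => φ a = l)
        = Finset.Ioc (ψ (l - 1)) (ψ l) := by
      ext a
      simp only [Finset.mem_filter, Finset.mem_Icc, Finset.mem_Ioc]
      constructor
      · rintro ⟨⟨ha0, hak⟩, hfa⟩
        have h1 : a ≤ ψ l := (hadj a l ha0 hak (by omega) hlm).mpr (by omega)
        have h2 : ¬ a ≤ ψ (l - 1) := by
          intro h
          have := (hadj a (l - 1) ha0 hak (by omega) (by omega)).mp h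
          omega
        exact ⟨by omega, h1⟩
      · rintro ⟨h1, h2⟩
        have ha0 : 0 ≤ a := by omega
        have hak : a ≤ k := by omega
        have hfa1 : φ a ≤ l := (hadj a l ha0 hak (by omega) hlm).mp h2
        have hfa2 : ¬ φ a ≤ l - 1 := by
          intro h
          have := (hadj a (l - 1) ha0 hak (by omega) (by omega)).mpr h
          omega
        exact ⟨⟨ha0, hak⟩, by omega⟩
    rw [hfe, Int.card_Ioc]
    have hle : ψ (l - 1) ≤ ψ l := hψmono (l - 1) l (by omega) (by omega) hlm
    omega
  constructor
  · constructor
    · intro h l hl1 hlm; rw [key l hl1 hlm]; exact h l hl1 hlm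
    · intro h l hl1 hlm; have := h l hl1 hlm; rw [key l hl1 hlm] at this; exact this
  · constructor
    · -- (1) → (3)
      intro h r hr0 hrk
      have hrk' : r ≤ k := by omega
      have hrwk : r + w ≤ k := by omega
      rcases le_or_gt (φ r) 0 with h0 | h0
      · have := hφ r hr0 hrk'
        simp only [le_max_iff]; omega
      · set l := φ r with hl
        have hlm : l ≤ m := (hφ r hr0 hrk').2
        have hr1 : r ≤ ψ l := (hadj r l hr0 hrk' (by omega) hlm).mpr (le_refl _)
        have hr2 : ¬ r ≤ ψ (l - 1) := by
          intro hx
          have := (hadj r (l - 1) hr0 hrk' (by omega) (by omega)).mp hx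
          omega
        have hdiff := h l (by omega) hlm
        have hnot : ¬ r + w ≤ ψ l := by omega
        have : ¬ φ (r + w) ≤ l := by
          intro hx
          exact hnot ((hadj (r + w) l (by omega) hrwk (by omega) hlm).mpr hx)
        simp only [le_max_iff]; omega
    · -- (3) → (1)
      intro h l hl1 hlm
      by_contra hc
      push_neg at hc
      have hψl := hψ l (by omega) hlm
      have hψl1 := hψ (l - 1) (by omega) (by omega)
      set r := ψ (l - 1) + 1 with hr
      have hr0 : 0 ≤ r := by omega
      have hrwk : r + w ≤ ψ l := by omega
      have hrk : r ≤ k - w := by omega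
      have hfr : ¬ φ r ≤ l - 1 := by
        intro hx
        have := (hadj r (l - 1) hr0 (by omega) (by omega) (by omega)).mpr hx
        omega
      have hfrw : φ (r + w) ≤ l :=
        (hadj (r + w) l (by omega) (by omega) (by omega) hlm).mp (by omega)
      have := h r hr0 hrk
      simp only [le_max_iff] at this
      omega
end

section
/- Let k, m ∈ ℕ, w ∈ ℤ⁺, and (φ, ψ) a Galois connection between [0,k] and [0,m] with ψ(0) = 0. If ψ(l) - ψ(l-1) ≤ w for all l ∈ [1,m], then φ(a) ∈ [1,m] for all a ∈ [1,k], and φ(r) + 1 ≤ φ(r+w) for all r ∈ [0, k-w]. -/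
/-- If `(φ, ψ)` is a Galois connection between `[0,k]` and `[0,m]` with
`ψ 0 = 0` and `ψ l - ψ (l-1) ≤ w` for all `l ∈ [1,m]`, then `φ a ∈ [1,m]`
for all `a ∈ [1,k]`, and `φ r + 1 ≤ φ (r+w)` for all `r ∈ [0, k-w]`. -/
theorem stmt_8 (k m w : ℤ) (hk : 0 ≤ k) (hm : 0 ≤ m) (hw : 1 ≤ w)
    (φ ψ : ℤ → ℤ) (hgc : IsGC k m φ ψ) (hψ0 : ψ 0 = 0)
    (hstep : ∀ l, 1 ≤ l → l ≤ m → ψ l - ψ (l - 1) ≤ w) :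
    (∀ a, 1 ≤ a → a ≤ k → 1 ≤ φ a ∧ φ a ≤ m) ∧
    (∀ r, 0 ≤ r → r ≤ k - w → φ r + 1 ≤ φ (r + w)) := by
  obtain ⟨hφb, hψb, hφmono, hψmono, hadj⟩ := hgc
  have part1 : ∀ a, 1 ≤ a → a ≤ k → 1 ≤ φ a ∧ φ a ≤ m := by
    intro a ha hak
    have ha0 : (0:ℤ) ≤ a := by linarith
    have hb := hφb a ha0 hak
    refine ⟨?_, hb.2⟩
    by_contra h
    have h0 : φ a ≤ 0 := by linarith
    have := (hadj a 0 ha0 hak le_rfl hm).mpr h0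
    rw [hψ0] at this
    linarith
  refine ⟨part1, ?_⟩
  intro r hr hrk
  have hrw0 : (0:ℤ) ≤ r + w := by linarith
  have hrwk : r + w ≤ k := by linarith
  have hrk' : r ≤ k := by linarith
  by_contra h
  have hle : φ (r + w) ≤ φ r := by linarith
  have hφr := hφb r hr hrk'
  have hψφ : r + w ≤ ψ (φ r) :=
    (hadj (r + w) (φ r) hrw0 hrwk hφr.1 hφr.2).mpr hle
  rcases eq_or_lt_of_le hφr.1 with heq | hpos
  · rw [← heq, hψ0] at hψφ
    linarith
  · set l := φ r with hl
    have hl1 : 1 ≤ l := hpos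
    have hstep' := hstep l hl1 hφr.2
    have hl10 : (0:ℤ) ≤ l - 1 := by linarith
    have hl1m : l - 1 ≤ m := by linarith
    have hnle : ¬ (φ r ≤ l - 1) := by omega
    have : ¬ (r ≤ ψ (l - 1)) := fun hc =>
      hnle ((hadj r (l - 1) hr hrk' hl10 hl1m).mp hc)
    omega
end

section
/- Let k, m ∈ ℕ, w ∈ ℤ⁺. Let (φ, ψ) be a Galois connection between [0,k] and [0,m] with ψ(0) = 0 and ψ(l) - ψ(l-1) ≤ w for all l ∈ [1,m]. Let (τ, η) be a Galois connection between [0, wm-k] and [0,m]. For γ ∈ ℤ, set A_γ = {φ(u) : u ∈ [1,k], u ≡ γ + k (mod w)} and B_γ = {m + 1 - τ(v) : v ∈ [1, wm-k], v ≡ γ (mod w)}. Then the following are equivalent: (1) η(l) = ψ(m-l) + wl - k for all l ∈ [0,m]; (2) for every γ ∈ ℤ, A_γ ∩ B_γ = ∅ and A_γ ∪ B_γ = [1,m]; (3) for every γ ∈ ℤ, A_γ ∪ B_γ = [1,m]. -/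
/-- `A_γ = {φ u : u ∈ [1,k], u ≡ γ + k (mod w)}`. -/
def Aset (k w : ℤ) (φ : ℤ → ℤ) (γ : ℤ) : Set ℤ :=
  {x | ∃ u, 1 ≤ u ∧ u ≤ k ∧ u ≡ γ + k [ZMOD w] ∧ φ u = x}

/-- `B_γ = {m + 1 - τ v : v ∈ [1, wm-k], v ≡ γ (mod w)}`. -/
def Bset (k m w : ℤ) (τ : ℤ → ℤ) (γ : ℤ) : Set ℤ :=
  {x | ∃ v, 1 ≤ v ∧ v ≤ w * m - k ∧ v ≡ γ [ZMOD w] ∧ m + 1 - τ v = x}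

section Aux

variable {k m w : ℤ} {φ ψ τ η : ℤ → ℤ}

/-- The top value of `ψ` is `k`. -/
lemma psi_m (hk : 0 ≤ k) (hm : 0 ≤ m) (h : IsGC k m φ ψ) : ψ m = k := by
  obtain ⟨hφr, hψr, hφmono, hψmono, hiff⟩ := h
  have h1 : k ≤ ψ m := (hiff k m hk le_rfl hm le_rfl).2 (hφr k hk le_rfl).2
  have h2 : ψ m ≤ k := (hψr m hm le_rfl).2
  omega

/-- `k ≤ w m`, from `ψ 0 = 0` and bounded steps. -/
lemma k_le_wm (hk : 0 ≤ k) (hm : 0 ≤ m) (h : IsGC k m φ ψ) (hψ0 : ψ 0 = 0)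
    (hstep : ∀ l, 1 ≤ l → l ≤ m → ψ l - ψ (l - 1) ≤ w) : k ≤ w * m := by
  have key : ∀ n : ℕ, (n : ℤ) ≤ m → ψ (n : ℤ) ≤ w * n := by
    intro n
    induction n with
    | zero => intro _; simp [hψ0]
    | succ p ih =>
      intro hp
      push_cast at hp ⊢
      have h1 : ψ ((p : ℤ) + 1) - ψ ((p : ℤ) + 1 - 1) ≤ w := hstep _ (by omega) hp
      have h2 : ψ (p : ℤ) ≤ w * p := ih (by omega)
      have e : (p : ℤ) + 1 - 1 = (p : ℤ) := by ring
      rw [e] at h1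
      nlinarith
  have hfin := key m.toNat (by omega)
  rw [Int.toNat_of_nonneg hm, psi_m hk hm h] at hfin
  linarith

/-- Characterization of membership in `Aset`. -/
lemma memA (hk : 0 ≤ k) (hm : 0 ≤ m) (h : IsGC k m φ ψ) {l : ℤ} (hl1 : 1 ≤ l) (hlm : l ≤ m)
    {γ : ℤ} :
    l ∈ Aset k w φ γ ↔ ∃ u, ψ (l - 1) < u ∧ u ≤ ψ l ∧ u ≡ γ + k [ZMOD w] := by
  obtain ⟨hφr, hψr, hφmono, hψmono, hiff⟩ := h
  constructor
  · rintro ⟨u, hu1, huk, hcong, heq⟩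
    refine ⟨u, ?_, ?_, hcong⟩
    · by_contra hcon
      push_neg at hcon
      have : φ u ≤ l - 1 := (hiff u (l - 1) (by omega) huk (by omega) (by omega)).1 hcon
      omega
    · exact (hiff u l (by omega) huk (by omega) hlm).2 (le_of_eq heq)
  · rintro ⟨u, hu1, hu2, hcong⟩
    have hψl1 : 0 ≤ ψ (l - 1) := (hψr (l - 1) (by omega) (by omega)).1
    have hψlk : ψ l ≤ k := (hψr l (by omega) hlm).2
    refine ⟨u, by omega, by omega, hcong, ?_⟩
    have h1 : φ u ≤ l := (hiff u l (by omega) (by omega) (by omega) hlm).1 hu2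
    have h2 : ¬ φ u ≤ l - 1 := by
      intro hc
      have : u ≤ ψ (l - 1) := (hiff u (l - 1) (by omega) (by omega) (by omega) (by omega)).2 hc
      omega
    omega

/-- Characterization of membership in `Bset`. -/
lemma memB (hm : 0 ≤ m) (hwmk : k ≤ w * m) (h' : IsGC (w * m - k) m τ η)
    {l : ℤ} (hl1 : 1 ≤ l) (hlm : l ≤ m) {γ : ℤ} :
    l ∈ Bset k m w τ γ ↔ ∃ v, η (m - l) < v ∧ v ≤ η (m - l + 1) ∧ v ≡ γ [ZMOD w] := by
  obtain ⟨hτr, hηr, hτmono, hηmono, hiff⟩ := h'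
  constructor
  · rintro ⟨v, hv1, hv2, hcong, heq⟩
    have hτv : τ v = m + 1 - l := by omega
    refine ⟨v, ?_, ?_, hcong⟩
    · by_contra hcon
      push_neg at hcon
      have : τ v ≤ m - l := (hiff v (m - l) (by omega) hv2 (by omega) (by omega)).1 hcon
      omega
    · exact (hiff v (m - l + 1) (by omega) hv2 (by omega) (by omega)).2 (by omega)
  · rintro ⟨v, hv1, hv2, hcong⟩
    have hη1 : 0 ≤ η (m - l) := (hηr (m - l) (by omega) (by omega)).1
    have hη2 : η (m - l + 1) ≤ w * m - k := (hηr (m - l + 1) (by omega) (by omega)).2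
    refine ⟨v, by omega, by omega, hcong, ?_⟩
    have h1 : τ v ≤ m - l + 1 := (hiff v (m - l + 1) (by omega) (by omega) (by omega) (by omega)).1 hv2
    have h2 : ¬ τ v ≤ m - l := by
      intro hc
      have : v ≤ η (m - l) := (hiff v (m - l) (by omega) (by omega) (by omega) (by omega)).2 hc
      omega
    omega

/-- `Aset` is contained in `[1,m]`. -/
lemma A_sub (hk : 0 ≤ k) (hm : 0 ≤ m) (h : IsGC k m φ ψ) (hψ0 : ψ 0 = 0) (γ : ℤ) :
    Aset k w φ γ ⊆ Set.Icc 1 m := by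
  obtain ⟨hφr, hψr, hφmono, hψmono, hiff⟩ := h
  rintro x ⟨u, hu1, huk, _, heq⟩
  have h1 : φ u ≤ m := (hφr u (by omega) huk).2
  have h2 : ¬ φ u ≤ 0 := by
    intro hc
    have : u ≤ ψ 0 := (hiff u 0 (by omega) huk le_rfl hm).2 hc
    omega
  have h3 : 0 ≤ φ u := (hφr u (by omega) huk).1
  constructor <;> omega

/-- A representative of each residue class in a half-open window of length `w`. -/
lemma exists_rep {w : ℤ} (hw : 1 ≤ w) (a c : ℤ) : ∃ u, a < u ∧ u ≤ a + w ∧ u ≡ c [ZMOD w] := by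
  set e := (c - (a + 1)) % w with he
  have h0 : 0 ≤ e := Int.emod_nonneg _ (by omega)
  have h1 : e < w := Int.emod_lt_of_pos _ (by omega)
  refine ⟨a + 1 + e, by omega, by omega, ?_⟩
  rw [Int.modEq_iff_dvd]
  have : c - (a + 1 + e) = w * ((c - (a + 1)) / w) := by
    rw [he, Int.emod_def]; ring
  rw [this]
  exact Dvd.intro _ rfl

/-- Direction (1) ⟹ (2). -/
lemma one_imp_two (hk : 0 ≤ k) (hm : 0 ≤ m) (hw : 1 ≤ w)
    (hgc : IsGC k m φ ψ) (hψ0 : ψ 0 = 0)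
    (hstep : ∀ l, 1 ≤ l → l ≤ m → ψ l - ψ (l - 1) ≤ w)
    (hgc' : IsGC (w * m - k) m τ η)
    (h1 : ∀ l, 0 ≤ l → l ≤ m → η l = ψ (m - l) + w * l - k) (γ : ℤ) :
    Aset k w φ γ ∩ Bset k m w τ γ = ∅ ∧
      Aset k w φ γ ∪ Bset k m w τ γ = Set.Icc 1 m := by
  have hψm := psi_m hk hm hgc
  have hwmk : k ≤ w * m := k_le_wm hk hm hgc hψ0 hstep
  have hη0 : η 0 = 0 := by
    have := h1 0 le_rfl hm
    simpa [hψm] using this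
  have hηml : ∀ l, 1 ≤ l → l ≤ m → η (m - l) = ψ l + w * (m - l) - k := by
    intro l h1' h2'
    have h := h1 (m - l) (by omega) (by omega)
    have e : m - (m - l) = l := by ring
    rw [e] at h
    exact h
  have hηml1 : ∀ l, 1 ≤ l → l ≤ m → η (m - l + 1) = ψ (l - 1) + w * (m - l) + w - k := by
    intro l h1' h2'
    have h := h1 (m - l + 1) (by omega) (by omega)
    have e : m - (m - l + 1) = l - 1 := by ring
    rw [e] at h
    rw [h]; ring
  have hBsub : Bset k m w τ γ ⊆ Set.Icc 1 m := by
    obtain ⟨hτr, hηr, hτmono, hηmono, hiff⟩ := hgc'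
    rintro x ⟨v, hv1, hv2, _, heq⟩
    have hr1 : 0 ≤ τ v := (hτr v (by omega) hv2).1
    have hr2 : τ v ≤ m := (hτr v (by omega) hv2).2
    have h2 : ¬ τ v ≤ 0 := by
      intro hc
      have : v ≤ η 0 := (hiff v 0 (by omega) hv2 le_rfl hm).2 hc
      omega
    constructor <;> omega
  have hAsub := A_sub (w := w) hk hm hgc hψ0 γ
  constructor
  · ext x
    simp only [Set.mem_inter_iff, Set.mem_empty_iff_false, iff_false, not_and]
    intro hxA hxB
    obtain ⟨hx1, hxm⟩ := hAsub hxA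
    obtain ⟨u, hu1, hu2, hucong⟩ := (memA hk hm hgc hx1 hxm).1 hxA
    obtain ⟨v, hv1, hv2, hvcong⟩ := (memB hm hwmk hgc' hx1 hxm).1 hxB
    rw [hηml x hx1 hxm] at hv1
    rw [hηml1 x hx1 hxm] at hv2
    set u' := v - w * (m - x) + k with hu'
    have hq1 : ψ x < u' := by simp only [hu']; linarith
    have hq2 : u' ≤ ψ (x - 1) + w := by simp only [hu']; linarith
    have hcu' : u' ≡ γ + k [ZMOD w] := by
      rw [Int.modEq_iff_dvd] at hvcong ⊢
      have e : γ + k - u' = (γ - v) + w * (m - x) := by rw [hu']; ring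
      rw [e]
      exact dvd_add hvcong ⟨m - x, rfl⟩
    have hud : w ∣ u' - u := Int.modEq_iff_dvd.1 (hucong.trans hcu'.symm)
    have : u' - u = 0 := Int.eq_zero_of_abs_lt_dvd hud (abs_lt.2 ⟨by omega, by omega⟩)
    omega
  · apply Set.Subset.antisymm
    · intro x hx
      rcases hx with h | h
      · exact hAsub h
      · exact hBsub h
    · intro l hl
      obtain ⟨hl1, hlm⟩ := hl
      obtain ⟨u0, hu0a, hu0b, hu0c⟩ := exists_rep hw (ψ (l - 1)) (γ + k)
      by_cases hcase : u0 ≤ ψ l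
      · left
        exact (memA hk hm hgc hl1 hlm).2 ⟨u0, hu0a, hcase, hu0c⟩
      · right
        push_neg at hcase
        refine (memB hm hwmk hgc' hl1 hlm).2 ⟨u0 + w * (m - l) - k, ?_, ?_, ?_⟩
        · rw [hηml l hl1 hlm]; linarith
        · rw [hηml1 l hl1 hlm]; linarith
        · rw [Int.modEq_iff_dvd] at hu0c ⊢
          have e : γ - (u0 + w * (m - l) - k) = (γ + k - u0) - w * (m - l) := by ring
          rw [e]
          exact dvd_sub hu0c ⟨m - l, rfl⟩

/-- Direction (3) ⟹ (1). -/
lemma three_imp_one (hk : 0 ≤ k) (hm : 0 ≤ m) (hw : 1 ≤ w)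
    (hgc : IsGC k m φ ψ) (hψ0 : ψ 0 = 0)
    (hstep : ∀ l, 1 ≤ l → l ≤ m → ψ l - ψ (l - 1) ≤ w)
    (hgc' : IsGC (w * m - k) m τ η)
    (h3 : ∀ γ : ℤ, Aset k w φ γ ∪ Bset k m w τ γ = Set.Icc 1 m) :
    ∀ l, 0 ≤ l → l ≤ m → η l = ψ (m - l) + w * l - k := by
  have hψm := psi_m hk hm hgc
  have hwmk : k ≤ w * m := k_le_wm hk hm hgc hψ0 hstep
  obtain ⟨hτr, hηr, hτmono, hηmono, hiff⟩ := id hgc'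
  have hηm : η m = w * m - k := by
    have ha : w * m - k ≤ η m :=
      (hiff (w * m - k) m (by omega) le_rfl hm le_rfl).2 (hτr (w * m - k) (by omega) le_rfl).2
    have hb : η m ≤ w * m - k := (hηr m hm le_rfl).2
    omega
  have hη0 : η 0 = 0 := by
    by_contra hne
    have hη0r := hηr 0 le_rfl hm
    have hpos : 1 ≤ η 0 := by omega
    have hτ1 : τ 1 = 0 := by
      have ha : τ 1 ≤ 0 := (hiff 1 0 (by omega) (by omega) le_rfl hm).1 hpos
      have hb := (hτr 1 (by omega) (by omega)).1
      omega
    have hmem : (m + 1 : ℤ) ∈ Bset k m w τ 1 :=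
      ⟨1, le_rfl, by omega, Int.ModEq.refl 1, by omega⟩
    have hmem' : (m + 1 : ℤ) ∈ Set.Icc (1 : ℤ) m := by
      rw [← h3 1]; exact Or.inr hmem
    have := hmem'.2
    omega
  -- key per-level inequality from the covering property
  have key : ∀ l, 1 ≤ l → l ≤ m →
      w ≤ (ψ l - ψ (l - 1)) + (η (m - l + 1) - η (m - l)) := by
    intro l hl1 hlm
    set n := w.toNat with hn
    have hnw : (n : ℤ) = w := Int.toNat_of_nonneg (by omega)
    haveI : NeZero n := ⟨by omega⟩
    set T : Finset ℤ :=
      Finset.Ioc (ψ (l - 1)) (ψ l) ∪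
        (Finset.Ioc (η (m - l)) (η (m - l + 1))).image (· + k) with hT
    have hsurj : ∀ c : ZMod n, ∃ x ∈ T, (x : ZMod n) = c := by
      intro c
      obtain ⟨γ, hγ⟩ := ZMod.intCast_surjective (c - ((k : ℤ) : ZMod n))
      have hl : l ∈ Aset k w φ γ ∪ Bset k m w τ γ := by
        rw [h3 γ]; exact ⟨hl1, hlm⟩
      rcases hl with hA | hB
      · obtain ⟨u, hu1, hu2, hcong⟩ := (memA hk hm hgc hl1 hlm).1 hA
        refine ⟨u, Finset.mem_union_left _ (Finset.mem_Ioc.2 ⟨hu1, hu2⟩), ?_⟩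
        have hcast : ((u : ℤ) : ZMod n) = ((γ + k : ℤ) : ZMod n) := by
          rw [ZMod.intCast_eq_intCast_iff, hnw]
          exact hcong
        rw [hcast]
        push_cast
        rw [hγ]
        ring
      · obtain ⟨v, hv1, hv2, hcong⟩ := (memB hm hwmk hgc' hl1 hlm).1 hB
        refine ⟨v + k,
          Finset.mem_union_right _ (Finset.mem_image.2 ⟨v, Finset.mem_Ioc.2 ⟨hv1, hv2⟩, rfl⟩), ?_⟩
        have hcast : ((v : ℤ) : ZMod n) = ((γ : ℤ) : ZMod n) := by
          rw [ZMod.intCast_eq_intCast_iff, hnw]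
          exact hcong
        push_cast
        rw [hcast, hγ]
        ring
    have hcard : n ≤ T.card := by
      have hsub : (Finset.univ : Finset (ZMod n)) ⊆ T.image (fun x : ℤ => (x : ZMod n)) := by
        intro c _
        obtain ⟨x, hx, hxc⟩ := hsurj c
        exact Finset.mem_image.2 ⟨x, hx, hxc⟩
      calc n = Fintype.card (ZMod n) := (ZMod.card n).symm
        _ = (Finset.univ : Finset (ZMod n)).card := rfl
        _ ≤ (T.image (fun x : ℤ => (x : ZMod n))).card := Finset.card_le_card hsub
        _ ≤ T.card := Finset.card_image_le
    have hc2 : T.card ≤ (ψ l - ψ (l - 1)).toNat + (η (m - l + 1) - η (m - l)).toNat := by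
      calc T.card ≤ (Finset.Ioc (ψ (l - 1)) (ψ l)).card +
            ((Finset.Ioc (η (m - l)) (η (m - l + 1))).image (· + k)).card :=
              Finset.card_union_le _ _
        _ ≤ _ := by
            refine add_le_add (le_of_eq (Int.card_Ioc _ _)) ?_
            exact le_trans Finset.card_image_le (le_of_eq (Int.card_Ioc _ _))
    have hmo1 : ψ (l - 1) ≤ ψ l := hgc.2.2.2.1 (l - 1) l (by omega) (by omega) hlm
    have hmo2 : η (m - l) ≤ η (m - l + 1) :=
      hηmono (m - l) (m - l + 1) (by omega) (by omega) (by omega)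
    omega
  -- upward induction: σ l ≤ η l
  have up : ∀ nn : ℕ, (nn : ℤ) ≤ m → ψ (m - nn) + w * nn - k ≤ η nn := by
    intro nn
    induction nn with
    | zero =>
      intro _
      have h0 : 0 ≤ η 0 := (hηr 0 le_rfl hm).1
      simp only [Nat.cast_zero, mul_zero, sub_zero, add_zero]
      rw [hψm]
      omega
    | succ p ih =>
      intro hp
      push_cast at hp ⊢
      have ihp := ih (by omega)
      have hkey := key (m - p) (by omega) (by omega)
      have e1 : m - (m - (p : ℤ)) + 1 = (p : ℤ) + 1 := by ring
      have e2 : m - (m - (p : ℤ)) = (p : ℤ) := by ring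
      rw [e1, e2] at hkey
      have e3 : m - ((p : ℤ) + 1) = m - p - 1 := by ring
      rw [e3]
      have e4 : w * ((p : ℤ) + 1) = w * p + w := by ring
      rw [e4]
      linarith
  -- downward induction: η (m - nn) ≤ σ (m - nn)
  have down : ∀ nn : ℕ, (nn : ℤ) ≤ m → η (m - nn) ≤ ψ nn + w * (m - nn) - k := by
    intro nn
    induction nn with
    | zero =>
      intro _
      simp only [Nat.cast_zero, sub_zero]
      rw [hηm, hψ0]
      linarith
    | succ p ih =>
      intro hp
      push_cast at hp ⊢
      have ihp := ih (by omega)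
      have hkey := key ((p : ℤ) + 1) (by omega) (by omega)
      have e1 : (p : ℤ) + 1 - 1 = (p : ℤ) := by ring
      have e2 : m - ((p : ℤ) + 1) + 1 = m - p := by ring
      rw [e1, e2] at hkey
      have e3 : w * (m - ((p : ℤ) + 1)) = w * (m - p) - w := by ring
      rw [e3]
      linarith
  intro l hl0 hlm
  have hA : ψ (m - l) + w * l - k ≤ η l := by
    have h := up l.toNat (by omega)
    rwa [Int.toNat_of_nonneg hl0] at h
  have hB : η l ≤ ψ (m - l) + w * l - k := by
    have h := down (m - l).toNat (by omega)
    rw [Int.toNat_of_nonneg (by omega : (0 : ℤ) ≤ m - l)] at h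
    have e : m - (m - l) = l := by ring
    rw [e] at h
    exact h
  linarith

end Aux

/-- Theorem 2.2 (central theorem): equivalence of (1) the duality formula
`η l = ψ (m-l) + w l - k`, (2) the partition statement
`A_γ ∩ B_γ = ∅` and `A_γ ∪ B_γ = [1,m]` for every `γ`, and (3) the covering
statement `A_γ ∪ B_γ = [1,m]` for every `γ`. -/
theorem stmt_10 (k m w : ℤ) (hk : 0 ≤ k) (hm : 0 ≤ m) (hw : 1 ≤ w)
    (φ ψ τ η : ℤ → ℤ)
    (hgc : IsGC k m φ ψ) (hψ0 : ψ 0 = 0)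
    (hstep : ∀ l, 1 ≤ l → l ≤ m → ψ l - ψ (l - 1) ≤ w)
    (hgc' : IsGC (w * m - k) m τ η) :
    ((∀ l, 0 ≤ l → l ≤ m → η l = ψ (m - l) + w * l - k) ↔
      (∀ γ : ℤ, Aset k w φ γ ∩ Bset k m w τ γ = ∅ ∧
        Aset k w φ γ ∪ Bset k m w τ γ = Set.Icc 1 m)) ∧
    ((∀ l, 0 ≤ l → l ≤ m → η l = ψ (m - l) + w * l - k) ↔
      (∀ γ : ℤ, Aset k w φ γ ∪ Bset k m w τ γ = Set.Icc 1 m)) := by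
  have h12 := fun h1 γ => one_imp_two hk hm hw hgc hψ0 hstep hgc' h1 γ
  have h31 := three_imp_one hk hm hw hgc hψ0 hstep hgc'
  constructor
  · exact ⟨fun h1 γ => h12 h1 γ, fun h2 => h31 (fun γ => (h2 γ).2)⟩
  · exact ⟨fun h1 γ => (h12 h1 γ).2, fun h3 => h31 h3⟩
end

section
/- Let E be a finite set of size m, w ∈ ℤ⁺, and (E, f) a w-demi-matroid with k = f(E). Define h: 2^E → ℤ by h(A) = f(E - A) + w|A| - f(E). Then (E, h) is a w-demi-matroid with h(E) = wm - k, and moreover f(A) = h(E - A) + w|A| - h(E) for every A ⊆ E. -/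
/-- A `w`-demi-matroid on a finite set `E`: `f ∅ = 0` and for all `A ⊆ B`,
`0 ≤ f B - f A ≤ w (|B| - |A|)`. -/
def IsWDemiMatroid {E : Type*} [Fintype E] [DecidableEq E] (w : ℤ)
    (f : Finset E → ℤ) : Prop :=
  f ∅ = 0 ∧ ∀ A B : Finset E, A ⊆ B →
    0 ≤ f B - f A ∧ f B - f A ≤ w * ((B.card : ℤ) - A.card)

/-- Proposition 4.1: the dual `h A = f (E - A) + w |A| - f E` of a
`w`-demi-matroid is a `w`-demi-matroid with `h E = wm - k`, and
`f A = h (E - A) + w |A| - h E` for every `A ⊆ E`. -/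
theorem stmt_11 {E : Type*} [Fintype E] [DecidableEq E] (m : ℕ)
    (hm : Fintype.card E = m) (w : ℤ) (hw : 1 ≤ w)
    (f : Finset E → ℤ) (hf : IsWDemiMatroid w f)
    (k : ℤ) (hk : f Finset.univ = k)
    (h : Finset E → ℤ)
    (hh : ∀ A : Finset E, h A = f Aᶜ + w * A.card - f Finset.univ) :
    IsWDemiMatroid w h ∧ h Finset.univ = w * m - k ∧
    ∀ A : Finset E, f A = h Aᶜ + w * A.card - h Finset.univ := by
  obtain ⟨hf0, hfm⟩ := hf
  have hcard : ∀ A : Finset E, (Aᶜ.card : ℤ) = (Fintype.card E : ℤ) - A.card := by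
    intro A
    have h1 := Finset.card_compl A
    have h2 : A.card ≤ Fintype.card E := Finset.card_le_univ A |>.trans_eq Finset.card_univ
    omega
  refine ⟨⟨?_, ?_⟩, ?_, ?_⟩
  · rw [hh]; simp [hf0]
  · intro A B hAB
    have hBA : Bᶜ ⊆ Aᶜ := Finset.compl_subset_compl.mpr hAB
    have := hfm Bᶜ Aᶜ hBA
    have h1 := hcard A
    have h2 := hcard B
    rw [hh A, hh B]
    constructor <;> nlinarith [this.1, this.2]
  · rw [hh]
    simp [hf0, hk, hm]
  · intro A
    rw [hh Aᶜ, hh Finset.univ]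
    have h1 := hcard A
    simp [hf0, h1]
    ring
end

section
/- Let E be a finite set and C ⊆ 2^E with ∅, E ∈ C such that C is an abundance and C is closed under unions and intersections (I ∩ J ∈ C and I ∪ J ∈ C for all I, J ∈ C). Then there exists a partial order ⪯ on E such that C is exactly the set of ideals of the poset (E, ⪯). -/
/-- Proposition 4.2(2): a collection `𝒞 ⊆ 2^E` containing `∅` and `E` which is
an abundance and is closed under unions and intersections is the set of ideals
of some partial order on `E`. -/
theorem stmt_13 {E : Type*} [Fintype E] [DecidableEq E] (𝒞 : Set (Finset E))
    (hempty : (∅ : Finset E) ∈ 𝒞) (huniv : (Finset.univ : Finset E) ∈ 𝒞)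
    (hup : ∀ A ∈ 𝒞, A ≠ Finset.univ →
      ∃ B ∈ 𝒞, A ⊆ B ∧ B.card = A.card + 1)
    (hdown : ∀ B ∈ 𝒞, B ≠ ∅ → ∃ A ∈ 𝒞, A ⊆ B ∧ A.card + 1 = B.card)
    (hcap : ∀ I ∈ 𝒞, ∀ J ∈ 𝒞, I ∩ J ∈ 𝒞)
    (hcup : ∀ I ∈ 𝒞, ∀ J ∈ 𝒞, I ∪ J ∈ 𝒞) :
    ∃ r : E → E → Prop, IsPartialOrder E r ∧
      𝒞 = {I : Finset E | ∀ v ∈ I, ∀ u, r u v → u ∈ I} := by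
  classical
  set r : E → E → Prop := fun u v => ∀ I ∈ 𝒞, v ∈ I → u ∈ I with hr
  -- separation lemma
  have sep : ∀ n (I : Finset E), I ∈ 𝒞 → I.card ≤ n → ∀ u v, u ∈ I → v ∈ I → u ≠ v →
      ∃ J ∈ 𝒞, (u ∈ J ∧ v ∉ J) ∨ (v ∈ J ∧ u ∉ J) := by
    intro n
    induction n with
    | zero =>
        intro I _ hc u v hu _ _
        rw [Nat.le_zero, Finset.card_eq_zero] at hc
        subst hc; simp at hu
    | succ n ih =>
        intro I hI hc u v hu hv huv
        have hne : I ≠ ∅ := by rintro rfl; simp at hu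
        obtain ⟨A, hA, hAI, hcard⟩ := hdown I hI hne
        by_cases hu' : u ∈ A
        · by_cases hv' : v ∈ A
          · exact ih A hA (by omega) u v hu' hv' huv
          · exact ⟨A, hA, Or.inl ⟨hu', hv'⟩⟩
        · by_cases hv' : v ∈ A
          · exact ⟨A, hA, Or.inr ⟨hv', hu'⟩⟩
          · exfalso
            have hsub : ({u, v} : Finset E) ⊆ I \ A := by
              intro x hx
              simp only [Finset.mem_insert, Finset.mem_singleton] at hx
              rcases hx with rfl | rfl <;> simp [Finset.mem_sdiff, hu, hv, hu', hv']
            have h2 : ({u, v} : Finset E).card = 2 := Finset.card_pair huv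
            have hle := Finset.card_le_card hsub
            have hsd := Finset.card_sdiff_of_subset hAI
            omega
  have hsep : ∀ u v : E, u ≠ v →
      ∃ J ∈ 𝒞, (u ∈ J ∧ v ∉ J) ∨ (v ∈ J ∧ u ∉ J) := fun u v h =>
    sep (Fintype.card E) Finset.univ huniv (by simp) u v (by simp) (by simp) h
  refine ⟨r, { refl := fun a I _ h => h,
               trans := fun a b c hab hbc I hI hc => hab I hI (hbc I hI hc),
               antisymm := fun a b hab hba => ?_ }, ?_⟩
  · by_contra hne
    obtain ⟨J, hJ, h⟩ := hsep a b hne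
    rcases h with ⟨ha, hb⟩ | ⟨hb, ha⟩
    · exact hb (hba J hJ ha)
    · exact ha (hab J hJ hb)
  · ext I
    simp only [Set.mem_setOf_eq]
    constructor
    · intro hI v hv u hu
      exact hu I hI hv
    · intro hideal
      -- D v : the minimal set of 𝒞 containing v
      have hDex : ∀ v : E, ∃ D ∈ 𝒞, v ∈ D ∧ ∀ u ∈ D, r u v := by
        intro v
        let 𝒞f : Finset (Finset E) := (Set.toFinite 𝒞).toFinset
        let F : Finset (Finset E) := 𝒞f.filter (fun J => v ∈ J)
        have hFsub : ∀ J ∈ F, J ∈ 𝒞 ∧ v ∈ J := by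
          intro J hJ
          simp only [F, 𝒞f, Finset.mem_filter, Set.Finite.mem_toFinset] at hJ
          exact hJ
        have hFne : F.Nonempty :=
          ⟨Finset.univ, Finset.mem_filter.2 ⟨(Set.Finite.mem_toFinset _).2 huniv, by simp⟩⟩
        -- inf of a nonempty family in 𝒞 lies in 𝒞
        have hinf : ∀ (G : Finset (Finset E)), G.Nonempty → (∀ J ∈ G, J ∈ 𝒞) →
            G.inf id ∈ 𝒞 := by
          intro G hGne
          induction hGne using Finset.Nonempty.cons_induction with
          | singleton a => intro h; simpa using h a (by simp)
          | cons a s ha hs ih =>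
              intro h
              rw [Finset.inf_cons]
              have : (id a : Finset E) ∩ s.inf id ∈ 𝒞 :=
                hcap a (h a (by simp)) _ (ih fun J hJ => h J (by simp [hJ]))
              simpa [Finset.inf_eq_inter] using this
        refine ⟨F.inf id, hinf F hFne (fun J hJ => (hFsub J hJ).1), ?_, ?_⟩
        · rw [Finset.mem_inf]
          intro J hJ
          exact (hFsub J hJ).2
        · intro u hu J hJ hvJ
          rw [Finset.mem_inf] at hu
          exact hu J (Finset.mem_filter.2 ⟨(Set.Finite.mem_toFinset _).2 hJ, hvJ⟩)
      choose D hD𝒞 hDmem hDr using hDex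
      have hsup : ∀ s : Finset E, s.sup D ∈ 𝒞 := by
        intro s
        induction s using Finset.induction with
        | empty => simpa using hempty
        | @insert a t hx ih =>
            rw [Finset.sup_insert]
            have : D a ∪ t.sup D ∈ 𝒞 := hcup _ (hD𝒞 a) _ ih
            simpa [Finset.sup_eq_union] using this
      have heq : I.sup D = I := by
        apply Finset.Subset.antisymm
        · intro u hu
          rw [Finset.mem_sup] at hu
          obtain ⟨v, hv, hu⟩ := hu
          exact hideal v hv u (hDr v u hu)
        · intro v hv
          rw [Finset.mem_sup]
          exact ⟨v, hv, hDmem v⟩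
      have := hsup I
      rwa [heq] at this
end

section
/- Let E be a finite set with |E| = m, w ∈ ℤ⁺, and (E, f) a w-demi-matroid with k = f(E). Define h: 2^E → ℤ by h(B) = f(E - B) + w|B| - k. Let C ⊆ 2^E with ∅, E ∈ C be an abundance, and let D = {E - A : A ∈ C}. Define d_a(f, C) = min{|B| : B ∈ C, a ≤ f(B)} for a ∈ [0,k], and K_b(f, C) = max{f(B) : B ∈ C, |B| = b} for b ∈ [0,m], and similarly for (h, D). Then: (1) K_l(h, D) = K_{m-l}(f, C) + wl - k for all l ∈ [0,m]; (2) for every γ ∈ ℤ, the sets {d_u(f, C) : u ∈ [1,k], u ≡ γ + k (mod w)} and {m + 1 - d_v(h, D) : v ∈ [1, wm-k], v ≡ γ (mod w)} are disjoint and their union is [1,m]. -/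
/-- The `a`-th generalized weight `d_a(f, 𝒞) = min {|B| : B ∈ 𝒞, a ≤ f B}`. -/
noncomputable def dgen {E : Type*} (f : Finset E → ℤ) (𝒞 : Set (Finset E))
    (a : ℤ) : ℤ :=
  sInf {x | ∃ B ∈ 𝒞, a ≤ f B ∧ (B.card : ℤ) = x}

/-- The `b`-th profile `K_b(f, 𝒞) = max {f B : B ∈ 𝒞, |B| = b}`. -/
noncomputable def Kgen {E : Type*} (f : Finset E → ℤ) (𝒞 : Set (Finset E))
    (b : ℕ) : ℤ :=
  sSup {x | ∃ B ∈ 𝒞, B.card = b ∧ f B = x}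

set_option linter.unusedSectionVars false
set_option linter.unusedVariables false


section AuxWei

variable {E : Type*} [Fintype E] [DecidableEq E]

lemma auxWei_card_exists (m : ℕ) (hm : Fintype.card E = m)
    (𝒞 : Set (Finset E)) (hempty : (∅ : Finset E) ∈ 𝒞)
    (hup : ∀ A ∈ 𝒞, A ≠ Finset.univ → ∃ B ∈ 𝒞, A ⊆ B ∧ B.card = A.card + 1) :
    ∀ b : ℕ, b ≤ m → ∃ B ∈ 𝒞, B.card = b := by
  intro b
  induction b with
  | zero => exact fun _ => ⟨∅, hempty, rfl⟩
  | succ b ih =>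
    intro hb
    obtain ⟨B, hB, hcard⟩ := ih (Nat.le_of_succ_le hb)
    have hBne : B ≠ Finset.univ := by
      intro hEq; rw [hEq, Finset.card_univ, hm] at hcard; omega
    obtain ⟨C, hC, _, hcC⟩ := hup B hB hBne
    exact ⟨C, hC, by omega⟩

lemma auxWei_f_le (w : ℤ) (f : Finset E → ℤ) (hf : IsWDemiMatroid w f)
    (k : ℤ) (hk : f Finset.univ = k) (B : Finset E) : f B ≤ k := by
  have := (hf.2 B Finset.univ (Finset.subset_univ B)).1
  omega

lemma auxWei_bddAbove (w : ℤ) (f : Finset E → ℤ) (hf : IsWDemiMatroid w f)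
    (k : ℤ) (hk : f Finset.univ = k) (𝒞 : Set (Finset E)) (b : ℕ) :
    BddAbove {x | ∃ B ∈ 𝒞, B.card = b ∧ f B = x} := by
  refine ⟨k, ?_⟩
  rintro x ⟨B, hB, _, rfl⟩
  exact auxWei_f_le w f hf k hk B

lemma auxWei_K_le (w : ℤ) (f : Finset E → ℤ) (hf : IsWDemiMatroid w f)
    (k : ℤ) (hk : f Finset.univ = k) (𝒞 : Set (Finset E))
    {B : Finset E} (hB : B ∈ 𝒞) {b : ℕ} (hb : B.card = b) :
    f B ≤ Kgen f 𝒞 b :=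
  le_csSup (auxWei_bddAbove w f hf k hk 𝒞 b) ⟨B, hB, hb, rfl⟩

lemma auxWei_K_mem (m : ℕ) (hm : Fintype.card E = m)
    (w : ℤ) (f : Finset E → ℤ) (hf : IsWDemiMatroid w f)
    (k : ℤ) (hk : f Finset.univ = k)
    (𝒞 : Set (Finset E)) (hempty : (∅ : Finset E) ∈ 𝒞)
    (hup : ∀ A ∈ 𝒞, A ≠ Finset.univ → ∃ B ∈ 𝒞, A ⊆ B ∧ B.card = A.card + 1)
    (b : ℕ) (hb : b ≤ m) :
    ∃ B ∈ 𝒞, B.card = b ∧ f B = Kgen f 𝒞 b := by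
  have hne : {x | ∃ B ∈ 𝒞, B.card = b ∧ f B = x}.Nonempty := by
    obtain ⟨B, hB, hc⟩ := auxWei_card_exists m hm 𝒞 hempty hup b hb
    exact ⟨f B, B, hB, hc, rfl⟩
  have := Int.csSup_mem hne (auxWei_bddAbove w f hf k hk 𝒞 b)
  obtain ⟨B, hB, hc, hfB⟩ := this
  exact ⟨B, hB, hc, hfB⟩

lemma auxWei_K_zero (w : ℤ) (f : Finset E → ℤ) (hf : IsWDemiMatroid w f)
    (𝒞 : Set (Finset E)) (hempty : (∅ : Finset E) ∈ 𝒞) :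
    Kgen f 𝒞 0 = 0 := by
  have : {x | ∃ B ∈ 𝒞, B.card = 0 ∧ f B = x} = {0} := by
    ext x
    constructor
    · rintro ⟨B, hB, hc, rfl⟩
      have : B = ∅ := Finset.card_eq_zero.mp hc
      simp [this, hf.1]
    · rintro rfl
      exact ⟨∅, hempty, Finset.card_empty, hf.1⟩
  rw [Kgen, this, csSup_singleton]

lemma auxWei_K_top (m : ℕ) (hm : Fintype.card E = m)
    (w : ℤ) (f : Finset E → ℤ) (hf : IsWDemiMatroid w f)
    (k : ℤ) (hk : f Finset.univ = k)
    (𝒞 : Set (Finset E)) (huniv : (Finset.univ : Finset E) ∈ 𝒞) :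
    Kgen f 𝒞 m = k := by
  have : {x | ∃ B ∈ 𝒞, B.card = m ∧ f B = x} = {k} := by
    ext x
    constructor
    · rintro ⟨B, hB, hc, rfl⟩
      have : B = Finset.univ := (Finset.card_eq_iff_eq_univ _).mp (by rw [hc, hm])
      simp [this, hk]
    · rintro rfl
      exact ⟨Finset.univ, huniv, by rw [Finset.card_univ, hm], hk⟩
  rw [Kgen, this, csSup_singleton]

lemma auxWei_K_mono (m : ℕ) (hm : Fintype.card E = m)
    (w : ℤ) (f : Finset E → ℤ) (hf : IsWDemiMatroid w f)
    (k : ℤ) (hk : f Finset.univ = k)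
    (𝒞 : Set (Finset E)) (hempty : (∅ : Finset E) ∈ 𝒞)
    (hup : ∀ A ∈ 𝒞, A ≠ Finset.univ → ∃ B ∈ 𝒞, A ⊆ B ∧ B.card = A.card + 1)
    {b c : ℕ} (hbc : b ≤ c) (hcm : c ≤ m) :
    Kgen f 𝒞 b ≤ Kgen f 𝒞 c := by
  induction c with
  | zero => simp_all
  | succ c ih =>
    rcases Nat.lt_or_ge b (c+1) with hlt | hge
    · have step : Kgen f 𝒞 c ≤ Kgen f 𝒞 (c+1) := by
        obtain ⟨A, hA, hcA, hfA⟩ := auxWei_K_mem m hm w f hf k hk 𝒞 hempty hup c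
          (Nat.le_of_succ_le hcm)
        have hAne : A ≠ Finset.univ := by
          intro hEq; rw [hEq, Finset.card_univ, hm] at hcA; omega
        obtain ⟨B, hB, hAB, hcB⟩ := hup A hA hAne
        have h1 : f A ≤ f B := by have := (hf.2 A B hAB).1; omega
        have h2 : f B ≤ Kgen f 𝒞 (c+1) :=
          auxWei_K_le w f hf k hk 𝒞 hB (by omega)
        omega
      exact le_trans (ih (by omega) (by omega)) step
    · have : b = c + 1 := by omega
      simp [this]

lemma auxWei_K_step (m : ℕ) (hm : Fintype.card E = m)
    (w : ℤ) (f : Finset E → ℤ) (hf : IsWDemiMatroid w f)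
    (k : ℤ) (hk : f Finset.univ = k)
    (𝒞 : Set (Finset E)) (hempty : (∅ : Finset E) ∈ 𝒞)
    (hup : ∀ A ∈ 𝒞, A ≠ Finset.univ → ∃ B ∈ 𝒞, A ⊆ B ∧ B.card = A.card + 1)
    (hdown : ∀ B ∈ 𝒞, B ≠ ∅ → ∃ A ∈ 𝒞, A ⊆ B ∧ A.card + 1 = B.card)
    {c : ℕ} (hcm : c + 1 ≤ m) :
    Kgen f 𝒞 (c+1) ≤ Kgen f 𝒞 c + w := by
  obtain ⟨B, hB, hcB, hfB⟩ := auxWei_K_mem m hm w f hf k hk 𝒞 hempty hup (c+1) hcm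
  have hBne : B ≠ ∅ := by
    intro hEq; rw [hEq, Finset.card_empty] at hcB; omega
  obtain ⟨A, hA, hAB, hcA⟩ := hdown B hB hBne
  have h1 : f B - f A ≤ w * ((B.card : ℤ) - A.card) := (hf.2 A B hAB).2
  have hc : (B.card : ℤ) - A.card = 1 := by omega
  rw [hc, mul_one] at h1
  have h2 : f A ≤ Kgen f 𝒞 c := auxWei_K_le w f hf k hk 𝒞 hA (by omega)
  omega

lemma auxWei_dgen_eq (m : ℕ) (hm : Fintype.card E = m)
    (w : ℤ) (f : Finset E → ℤ) (hf : IsWDemiMatroid w f)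
    (k : ℤ) (hk : f Finset.univ = k)
    (𝒞 : Set (Finset E)) (hempty : (∅ : Finset E) ∈ 𝒞)
    (hup : ∀ A ∈ 𝒞, A ≠ Finset.univ → ∃ B ∈ 𝒞, A ⊆ B ∧ B.card = A.card + 1)
    {a : ℤ} {b : ℕ} (hb1 : 1 ≤ b) (hbm : b ≤ m)
    (h1 : Kgen f 𝒞 (b-1) < a) (h2 : a ≤ Kgen f 𝒞 b) :
    dgen f 𝒞 a = b := by
  obtain ⟨B, hB, hcB, hfB⟩ := auxWei_K_mem m hm w f hf k hk 𝒞 hempty hup b hbm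
  have hmem : (b : ℤ) ∈ {x | ∃ B ∈ 𝒞, a ≤ f B ∧ (B.card : ℤ) = x} :=
    ⟨B, hB, by omega, by exact_mod_cast congrArg Nat.cast hcB⟩
  have hlb : ∀ x ∈ {x | ∃ B ∈ 𝒞, a ≤ f B ∧ (B.card : ℤ) = x}, (b : ℤ) ≤ x := by
    rintro x ⟨C, hC, haC, rfl⟩
    by_contra hlt
    push_neg at hlt
    have hClt : C.card < b := by exact_mod_cast hlt
    have hCle : C.card ≤ b - 1 := by omega
    have hCm : C.card ≤ m := by rw [← hm]; exact Finset.card_le_univ C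
    have e1 : f C ≤ Kgen f 𝒞 C.card := auxWei_K_le w f hf k hk 𝒞 hC rfl
    have e2 : Kgen f 𝒞 C.card ≤ Kgen f 𝒞 (b-1) :=
      auxWei_K_mono m hm w f hf k hk 𝒞 hempty hup hCle (by omega)
    omega
  have hbdd : BddBelow {x | ∃ B ∈ 𝒞, a ≤ f B ∧ (B.card : ℤ) = x} := by
    refine ⟨0, ?_⟩
    rintro x ⟨C, _, _, rfl⟩
    positivity
  exact le_antisymm (csInf_le hbdd hmem) (le_csInf ⟨_, hmem⟩ hlb)

lemma auxWei_dgen_spec (m : ℕ) (hm : Fintype.card E = m)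
    (w : ℤ) (f : Finset E → ℤ) (hf : IsWDemiMatroid w f)
    (k : ℤ) (hk : f Finset.univ = k)
    (𝒞 : Set (Finset E)) (hempty : (∅ : Finset E) ∈ 𝒞)
    (huniv : (Finset.univ : Finset E) ∈ 𝒞)
    (hup : ∀ A ∈ 𝒞, A ≠ Finset.univ → ∃ B ∈ 𝒞, A ⊆ B ∧ B.card = A.card + 1)
    {a : ℤ} (ha1 : 1 ≤ a) (hak : a ≤ k) :
    ∃ b : ℕ, 1 ≤ b ∧ b ≤ m ∧ Kgen f 𝒞 (b-1) < a ∧ a ≤ Kgen f 𝒞 b ∧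
      dgen f 𝒞 a = b := by
  classical
  have hex : ∃ b : ℕ, b ≤ m ∧ a ≤ Kgen f 𝒞 b :=
    ⟨m, le_rfl, by rw [auxWei_K_top m hm w f hf k hk 𝒞 huniv]; exact hak⟩
  obtain ⟨hbm, hab⟩ := Nat.find_spec hex
  set b := Nat.find hex with hbdef
  have hb1 : 1 ≤ b := by
    rcases Nat.eq_zero_or_pos b with h0 | h0
    · exfalso
      rw [h0, auxWei_K_zero w f hf 𝒞 hempty] at hab
      omega
    · exact h0
  have hmin : ¬ (b - 1 ≤ m ∧ a ≤ Kgen f 𝒞 (b-1)) := Nat.find_min hex (by omega)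
  have hKb1 : Kgen f 𝒞 (b-1) < a := by
    by_contra hge
    exact hmin ⟨by omega, by omega⟩
  exact ⟨b, hb1, hbm, hKb1, hab,
    auxWei_dgen_eq m hm w f hf k hk 𝒞 hempty hup hb1 hbm hKb1 hab⟩

end AuxWei

/-- Theorem 4.1: Wei-type duality for `w`-demi-matroids with respect to an
abundance `𝒞` and its complement family `𝒟`. -/
theorem stmt_15 {E : Type*} [Fintype E] [DecidableEq E] (m : ℕ)
    (hm : Fintype.card E = m) (w : ℤ) (hw : 1 ≤ w)
    (f : Finset E → ℤ) (hf : IsWDemiMatroid w f)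
    (k : ℤ) (hk : f Finset.univ = k)
    (h : Finset E → ℤ)
    (hh : ∀ B : Finset E, h B = f Bᶜ + w * B.card - k)
    (𝒞 : Set (Finset E))
    (hempty : (∅ : Finset E) ∈ 𝒞) (huniv : (Finset.univ : Finset E) ∈ 𝒞)
    (hup : ∀ A ∈ 𝒞, A ≠ Finset.univ →
      ∃ B ∈ 𝒞, A ⊆ B ∧ B.card = A.card + 1)
    (hdown : ∀ B ∈ 𝒞, B ≠ ∅ → ∃ A ∈ 𝒞, A ⊆ B ∧ A.card + 1 = B.card)
    (𝒟 : Set (Finset E)) (h𝒟 : 𝒟 = {B | Bᶜ ∈ 𝒞}) :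
    (∀ l : ℕ, l ≤ m → Kgen h 𝒟 l = Kgen f 𝒞 (m - l) + w * l - k) ∧
    (∀ γ : ℤ,
      {x | ∃ u, 1 ≤ u ∧ u ≤ k ∧ u ≡ γ + k [ZMOD w] ∧ dgen f 𝒞 u = x} ∩
        {x | ∃ v, 1 ≤ v ∧ v ≤ w * m - k ∧ v ≡ γ [ZMOD w] ∧
          (m : ℤ) + 1 - dgen h 𝒟 v = x} = ∅ ∧
      {x | ∃ u, 1 ≤ u ∧ u ≤ k ∧ u ≡ γ + k [ZMOD w] ∧ dgen f 𝒞 u = x} ∪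
        {x | ∃ v, 1 ≤ v ∧ v ≤ w * m - k ∧ v ≡ γ [ZMOD w] ∧
          (m : ℤ) + 1 - dgen h 𝒟 v = x} = Set.Icc 1 (m : ℤ)) := by
  classical
  -- `h` is a `w`-demi-matroid
  have hf' : IsWDemiMatroid w h := by
    constructor
    · rw [hh]
      simp [Finset.compl_empty, hk]
    · intro A B hAB
      have hsub : Bᶜ ⊆ Aᶜ := Finset.compl_subset_compl.mpr hAB
      have h1 := (hf.2 Bᶜ Aᶜ hsub).1
      have h2 := (hf.2 Bᶜ Aᶜ hsub).2
      have c1 := Finset.card_compl A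
      have c2 := Finset.card_compl B
      have c3 := Finset.card_le_univ A
      have c4 := Finset.card_le_univ B
      have hcc : ((Aᶜ.card : ℤ) - (Bᶜ.card : ℤ)) = (B.card : ℤ) - A.card := by
        omega
      rw [hcc] at h2
      have key : h B - h A =
          w * ((B.card : ℤ) - A.card) - (f Aᶜ - f Bᶜ) := by
        rw [hh A, hh B]; ring
      constructor <;> linarith
  have hk' : h Finset.univ = w * m - k := by
    rw [hh]
    simp [Finset.compl_univ, hf.1, Finset.card_univ, hm]
  have hD : ∀ B : Finset E, B ∈ 𝒟 ↔ Bᶜ ∈ 𝒞 := fun B => by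
    rw [h𝒟]; exact Iff.rfl
  have hempty' : (∅ : Finset E) ∈ 𝒟 := (hD _).mpr (by rw [Finset.compl_empty]; exact huniv)
  have huniv' : (Finset.univ : Finset E) ∈ 𝒟 := (hD _).mpr (by rw [Finset.compl_univ]; exact hempty)
  have hup' : ∀ A ∈ 𝒟, A ≠ Finset.univ → ∃ B ∈ 𝒟, A ⊆ B ∧ B.card = A.card + 1 := by
    intro A hA hAne
    have hAc : Aᶜ ∈ 𝒞 := (hD A).mp hA
    have hAcne : Aᶜ ≠ ∅ := by
      intro hEq; exact hAne ((Finset.compl_eq_empty_iff A).mp hEq)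
    obtain ⟨C, hC, hCA, hcC⟩ := hdown Aᶜ hAc hAcne
    refine ⟨Cᶜ, (hD Cᶜ).mpr (by rwa [compl_compl]), Finset.subset_compl_comm.mp hCA, ?_⟩
    have c1 := Finset.card_compl A
    have c2 := Finset.card_compl C
    have c3 := Finset.card_le_univ A
    have c4 := Finset.card_le_univ C
    omega
  have hdown' : ∀ B ∈ 𝒟, B ≠ ∅ → ∃ A ∈ 𝒟, A ⊆ B ∧ A.card + 1 = B.card := by
    intro B hB hBne
    have hBc : Bᶜ ∈ 𝒞 := (hD B).mp hB
    have hBcne : Bᶜ ≠ Finset.univ := by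
      intro hEq; exact hBne ((Finset.compl_eq_univ_iff B).mp hEq)
    obtain ⟨C, hC, hBC, hcC⟩ := hup Bᶜ hBc hBcne
    refine ⟨Cᶜ, (hD Cᶜ).mpr (by rwa [compl_compl]), ?_, ?_⟩
    · have hx := Finset.compl_subset_compl.mpr hBC
      rwa [compl_compl] at hx
    · have c1 := Finset.card_compl B
      have c2 := Finset.card_compl C
      have c3 := Finset.card_le_univ B
      have c4 := Finset.card_le_univ C
      omega
  -- Part (1)
  have part1 : ∀ l : ℕ, l ≤ m → Kgen h 𝒟 l = Kgen f 𝒞 (m - l) + w * l - k := by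
    intro l hl
    apply le_antisymm
    · obtain ⟨B, hB, hcB, hfB⟩ :=
        auxWei_K_mem m hm w h hf' (w*m-k) hk' 𝒟 hempty' hup' l hl
      rw [← hfB, hh B, hcB]
      have hBc : Bᶜ ∈ 𝒞 := (hD B).mp hB
      have hcBc : Bᶜ.card = m - l := by
        have := Finset.card_compl B
        have := Finset.card_le_univ B
        omega
      have h1 := auxWei_K_le w f hf k hk 𝒞 hBc hcBc
      linarith
    · obtain ⟨A, hA, hcA, hfA⟩ :=
        auxWei_K_mem m hm w f hf k hk 𝒞 hempty hup (m-l) (Nat.sub_le m l)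
      have hAc : Aᶜ ∈ 𝒟 := (hD Aᶜ).mpr (by rwa [compl_compl])
      have hcAc : Aᶜ.card = l := by
        have := Finset.card_compl A
        have := Finset.card_le_univ A
        omega
      have hle := auxWei_K_le w h hf' (w*m-k) hk' 𝒟 hAc hcAc
      rw [hh Aᶜ, compl_compl, hcAc] at hle
      linarith
  refine ⟨part1, ?_⟩
  intro γ
  constructor
  · -- disjointness
    rw [Set.eq_empty_iff_forall_notMem]
    rintro x ⟨⟨u, hu1, huk, humod, hdu⟩, ⟨v, hv1, hvk, hvmod, hdv⟩⟩
    obtain ⟨b, hb1, hbm, hKb1, hKb, hdub⟩ :=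
      auxWei_dgen_spec m hm w f hf k hk 𝒞 hempty huniv hup hu1 huk
    obtain ⟨l, hl1, hlm, hKl1, hKl, hdvl⟩ :=
      auxWei_dgen_spec m hm w h hf' (w*m-k) hk' 𝒟 hempty' huniv' hup' hv1 hvk
    rw [hdub] at hdu
    rw [hdvl] at hdv
    have hbl : b + l = m + 1 := by omega
    rw [part1 (l-1) (by omega)] at hKl1
    rw [part1 l hlm] at hKl
    have e1 : m - (l-1) = b := by omega
    have e2 : ((l-1 : ℕ) : ℤ) = (l : ℤ) - 1 := by omega
    have e3 : m - l = b - 1 := by omega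
    rw [e1, e2] at hKl1
    rw [e3] at hKl
    obtain ⟨p, hp⟩ := Int.ModEq.dvd humod
    obtain ⟨q, hq⟩ := Int.ModEq.dvd hvmod
    have ew : w * (l:ℤ) = w * ((l:ℤ)-1) + w := by ring
    have h01 : 0 < (v + k - w * ((l:ℤ)-1)) - u := by linarith
    have h02 : (v + k - w * ((l:ℤ)-1)) - u < w := by linarith
    have hdvd : w ∣ (v + k - w * ((l:ℤ)-1)) - u := by
      exact ⟨p - q - ((l:ℤ)-1), by linear_combination hp - hq⟩
    have := Int.le_of_dvd h01 hdvd
    linarith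
  · -- union
    apply Set.Subset.antisymm
    · rintro x (⟨u, hu1, huk, humod, hdu⟩ | ⟨v, hv1, hvk, hvmod, hdv⟩)
      · obtain ⟨b, hb1, hbm, _, _, hdub⟩ :=
          auxWei_dgen_spec m hm w f hf k hk 𝒞 hempty huniv hup hu1 huk
        rw [hdub] at hdu
        exact Set.mem_Icc.mpr ⟨by omega, by omega⟩
      · obtain ⟨l, hl1, hlm, _, _, hdvl⟩ :=
          auxWei_dgen_spec m hm w h hf' (w*m-k) hk' 𝒟 hempty' huniv' hup' hv1 hvk
        rw [hdvl] at hdv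
        exact Set.mem_Icc.mpr ⟨by omega, by omega⟩
    · intro x hx
      rw [Set.mem_Icc] at hx
      obtain ⟨hx1, hxm⟩ := hx
      set b : ℕ := x.toNat with hbdef
      have hbx : (b : ℤ) = x := Int.toNat_of_nonneg (by omega)
      have hb1 : 1 ≤ b := by omega
      have hbm : b ≤ m := by omega
      set r := (Kgen f 𝒞 (b-1) - (γ+k)) % w with hr
      have hr0 : 0 ≤ r := Int.emod_nonneg _ (by omega)
      have hrw : r < w := Int.emod_lt_of_pos _ (by omega)
      set t := Kgen f 𝒞 (b-1) - r + w with ht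
      have hd1 : w ∣ t - (γ + k) := by
        have hd : w ∣ (Kgen f 𝒞 (b-1) - (γ+k)) - r :=
          Int.dvd_self_sub_of_emod_eq hr.symm
        have heq : t - (γ+k) = ((Kgen f 𝒞 (b-1) - (γ+k)) - r) + w := by
          rw [ht]; ring
        rw [heq]
        exact dvd_add hd dvd_rfl
      have htmod : t ≡ γ + k [ZMOD w] := by
        refine Int.modEq_iff_dvd.mpr ?_
        have : (γ + k) - t = -(t - (γ+k)) := by ring
        rw [this]
        exact dvd_neg.mpr hd1
      have hwin1 : Kgen f 𝒞 (b-1) < t := by rw [ht]; linarith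
      have hwin2 : t ≤ Kgen f 𝒞 (b-1) + w := by rw [ht]; linarith
      by_cases hcase : t ≤ Kgen f 𝒞 b
      · left
        refine ⟨t, ?_, ?_, htmod, ?_⟩
        · have h0 : Kgen f 𝒞 0 ≤ Kgen f 𝒞 (b-1) :=
            auxWei_K_mono m hm w f hf k hk 𝒞 hempty hup (Nat.zero_le _) (by omega)
          rw [auxWei_K_zero w f hf 𝒞 hempty] at h0
          omega
        · have h0 : Kgen f 𝒞 b ≤ Kgen f 𝒞 m :=
            auxWei_K_mono m hm w f hf k hk 𝒞 hempty hup hbm le_rfl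
          rw [auxWei_K_top m hm w f hf k hk 𝒞 huniv] at h0
          omega
        · rw [auxWei_dgen_eq m hm w f hf k hk 𝒞 hempty hup hb1 hbm hwin1 hcase]
          omega
      · right
        push_neg at hcase
        set l : ℕ := m + 1 - b with hl
        have hl1 : 1 ≤ l := by omega
        have hlm : l ≤ m := by omega
        set v := t - k + w * ((m:ℤ) - b) with hv
        have hKl1' : Kgen h 𝒟 (l-1) < v := by
          rw [part1 (l-1) (by omega)]
          have e1 : m - (l-1) = b := by omega
          have e2 : ((l-1 : ℕ) : ℤ) = (m : ℤ) - b := by omega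
          rw [e1, e2]
          linarith
        have hKl' : v ≤ Kgen h 𝒟 l := by
          rw [part1 l hlm]
          have e1 : m - l = b - 1 := by omega
          have e2 : ((l : ℕ) : ℤ) = (m : ℤ) + 1 - b := by omega
          rw [e1, e2]
          linarith
        refine ⟨v, ?_, ?_, ?_, ?_⟩
        · have h0 : Kgen h 𝒟 0 ≤ Kgen h 𝒟 (l-1) :=
            auxWei_K_mono m hm w h hf' (w*m-k) hk' 𝒟 hempty' hup' (Nat.zero_le _) (by omega)
          rw [auxWei_K_zero w h hf' 𝒟 hempty'] at h0
          omega
        · have h0 : Kgen h 𝒟 l ≤ Kgen h 𝒟 m :=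
            auxWei_K_mono m hm w h hf' (w*m-k) hk' 𝒟 hempty' hup' hlm le_rfl
          rw [auxWei_K_top m hm w h hf' (w*m-k) hk' 𝒟 huniv'] at h0
          omega
        · refine Int.modEq_iff_dvd.mpr ?_
          have heq : γ - v = -(t - (γ+k)) - w*((m:ℤ)-b) := by
            rw [hv]; ring
          rw [heq]
          exact dvd_sub (dvd_neg.mpr hd1) (dvd_mul_right w _)
        · rw [auxWei_dgen_eq m hm w h hf' (w*m-k) hk' 𝒟 hempty' hup' hl1 hlm hKl1' hKl']
          omega
end

section
/- Let E be a finite set with |E| = m, w ∈ ℤ⁺, and (E, f) a w-demi-matroid with k = f(E). Define h(B) = f(E - B) + w|B| - k. Let P = (E, ⪯) be a poset and P̄ its dual poset. With generalized weights d_a(f, P) = min{|B| : B an ideal of P, a ≤ f(B)} and profiles K_b(f, P) = max{f(B) : B an ideal of P, |B| = b}, it holds that: (1) K_l(h, P̄) = K_{m-l}(f, P) + wl - k for all l ∈ [0,m]; (2) for every γ ∈ ℤ, {d_u(f, P) : u ∈ [1,k], u ≡ γ + k (mod w)} and {m + 1 - d_v(h, P̄) : v ∈ [1, wm-k], v ≡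 γ (mod w)} partition [1,m]. -/
/-- The set of ideals (downward closed subsets) of the poset `E`. -/
def idealsOf (E : Type*) [PartialOrder E] : Set (Finset E) :=
  {I | ∀ v ∈ I, ∀ u, u ≤ v → u ∈ I}

/-- The set of ideals of the dual poset (upward closed subsets) of `E`. -/
def dualIdealsOf (E : Type*) [PartialOrder E] : Set (Finset E) :=
  {I | ∀ v ∈ I, ∀ u, v ≤ u → u ∈ I}

section Aux

variable {E : Type*} [Fintype E] [DecidableEq E]

/-- A structural property of a collection of subsets letting us build chains. -/
structure ChainSys (𝒞 : Set (Finset E)) : Prop where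
  empty : ∅ ∈ 𝒞
  ext : ∀ I ∈ 𝒞, I ≠ Finset.univ → ∃ x ∉ I, insert x I ∈ 𝒞
  shr : ∀ I ∈ 𝒞, I.Nonempty → ∃ x ∈ I, I.erase x ∈ 𝒞

variable {𝒞 : Set (Finset E)} {g : Finset E → ℤ} {w : ℤ}

lemma ChainSys.exists_card (h𝒞 : ChainSys 𝒞) :
    ∀ b : ℕ, b ≤ Fintype.card E → ∃ B ∈ 𝒞, B.card = b := by
  intro b
  induction b with
  | zero => exact fun _ => ⟨∅, h𝒞.empty, Finset.card_empty⟩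
  | succ b ih =>
    intro hb
    obtain ⟨B, hB, hcard⟩ := ih (by omega)
    have hne : B ≠ Finset.univ := by
      intro hB'
      rw [hB', Finset.card_univ] at hcard
      omega
    obtain ⟨x, hx, hx'⟩ := h𝒞.ext B hB hne
    exact ⟨insert x B, hx', by rw [Finset.card_insert_of_notMem hx, hcard]⟩

lemma Kset_finite (g : Finset E → ℤ) (𝒞 : Set (Finset E)) (b : ℕ) :
    Set.Finite {x | ∃ B ∈ 𝒞, B.card = b ∧ g B = x} :=
  (Set.finite_range g).subset (by rintro x ⟨B, _, _, rfl⟩; exact ⟨B, rfl⟩)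

lemma K_isGreatest (h𝒞 : ChainSys 𝒞) {b : ℕ} (hb : b ≤ Fintype.card E) :
    IsGreatest {x | ∃ B ∈ 𝒞, B.card = b ∧ g B = x} (Kgen g 𝒞 b) := by
  have hne : Set.Nonempty {x | ∃ B ∈ 𝒞, B.card = b ∧ g B = x} := by
    obtain ⟨B, hB, hc⟩ := h𝒞.exists_card b hb
    exact ⟨g B, B, hB, hc, rfl⟩
  constructor
  · exact hne.csSup_mem (Kset_finite g 𝒞 b)
  · intro x hx
    exact le_csSup (Kset_finite g 𝒞 b).bddAbove hx

lemma K_zero (h𝒞 : ChainSys 𝒞) (hg : IsWDemiMatroid w g) : Kgen g 𝒞 0 = 0 := by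
  refine IsGreatest.csSup_eq ⟨⟨∅, h𝒞.empty, Finset.card_empty, hg.1⟩, ?_⟩
  rintro x ⟨B, hB, hc, rfl⟩
  rw [Finset.card_eq_zero] at hc
  rw [hc, hg.1]

lemma ChainSys.univ_mem (h𝒞 : ChainSys 𝒞) : Finset.univ ∈ 𝒞 := by
  obtain ⟨B, hB, hc⟩ := h𝒞.exists_card (Fintype.card E) le_rfl
  rw [Finset.card_eq_iff_eq_univ] at hc
  rwa [hc] at hB

lemma K_top (h𝒞 : ChainSys 𝒞) :
    Kgen g 𝒞 (Fintype.card E) = g Finset.univ := by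
  refine IsGreatest.csSup_eq ⟨⟨Finset.univ, h𝒞.univ_mem, Finset.card_univ, rfl⟩, ?_⟩
  rintro x ⟨B, hB, hc, rfl⟩
  rw [Finset.card_eq_iff_eq_univ] at hc
  rw [hc]

lemma g_mono (hg : IsWDemiMatroid w g) {A B : Finset E} (hAB : A ⊆ B) :
    g A ≤ g B := by
  have := (hg.2 A B hAB).1; omega

lemma K_mono (h𝒞 : ChainSys 𝒞) (hg : IsWDemiMatroid w g) :
    ∀ {a b : ℕ}, a ≤ b → b ≤ Fintype.card E → Kgen g 𝒞 a ≤ Kgen g 𝒞 b := by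
  have step : ∀ b : ℕ, b + 1 ≤ Fintype.card E → Kgen g 𝒞 b ≤ Kgen g 𝒞 (b + 1) := by
    intro b hb
    obtain ⟨⟨B, hB, hc, hgB⟩, -⟩ := K_isGreatest (g := g) h𝒞 (le_of_lt (by omega : b < Fintype.card E))
    have hne : B ≠ Finset.univ := by
      intro h; rw [h, Finset.card_univ] at hc; omega
    obtain ⟨x, hx, hx'⟩ := h𝒞.ext B hB hne
    have hcard : (insert x B).card = b + 1 := by
      rw [Finset.card_insert_of_notMem hx, hc]
    have hmem : g (insert x B) ∈ {x | ∃ B ∈ 𝒞, B.card = b + 1 ∧ g B = x} :=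
      ⟨insert x B, hx', hcard, rfl⟩
    calc Kgen g 𝒞 b = g B := hgB.symm
      _ ≤ g (insert x B) := g_mono hg (Finset.subset_insert x B)
      _ ≤ Kgen g 𝒞 (b + 1) := (K_isGreatest h𝒞 hb).2 hmem
  intro a b hab hb
  induction b with
  | zero => simp_all
  | succ b ih =>
    rcases Nat.lt_or_ge a (b+1) with h | h
    · exact le_trans (ih (by omega) (by omega)) (step b hb)
    · have : a = b + 1 := by omega
      subst this; rfl

lemma K_step (h𝒞 : ChainSys 𝒞) (hg : IsWDemiMatroid w g) {b : ℕ}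
    (hb : b + 1 ≤ Fintype.card E) : Kgen g 𝒞 (b + 1) ≤ Kgen g 𝒞 b + w := by
  obtain ⟨⟨B, hB, hc, hgB⟩, -⟩ := K_isGreatest (g := g) h𝒞 hb
  have hne : B.Nonempty := Finset.card_pos.mp (by omega)
  obtain ⟨x, hx, hx'⟩ := h𝒞.shr B hB hne
  have hcard : (B.erase x).card = b := by
    rw [Finset.card_erase_of_mem hx, hc]
    omega
  have hsub : B.erase x ⊆ B := Finset.erase_subset x B
  have := (hg.2 (B.erase x) B hsub).2
  rw [hcard, hc] at this
  have hle : g (B.erase x) ≤ Kgen g 𝒞 b :=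
    (K_isGreatest h𝒞 (by omega)).2 ⟨B.erase x, hx', hcard, rfl⟩
  push_cast at this
  omega

lemma dgen_eq_of (h𝒞 : ChainSys 𝒞) (hg : IsWDemiMatroid w g) {b : ℕ}
    (hb1 : 1 ≤ b) (hb2 : b ≤ Fintype.card E) {u : ℤ}
    (h1 : Kgen g 𝒞 (b - 1) < u) (h2 : u ≤ Kgen g 𝒞 b) :
    dgen g 𝒞 u = b ∧ 1 ≤ u ∧ u ≤ g Finset.univ := by
  have hK0 : Kgen g 𝒞 0 = 0 := K_zero h𝒞 hg
  have hu1 : 1 ≤ u := by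
    have := K_mono h𝒞 hg (Nat.zero_le (b-1)) (by omega)
    omega
  have hu2 : u ≤ g Finset.univ := by
    have := K_mono h𝒞 hg hb2 le_rfl
    rw [K_top h𝒞] at this
    omega
  refine ⟨IsLeast.csInf_eq ⟨?_, ?_⟩, hu1, hu2⟩
  · obtain ⟨⟨B, hB, hc, hgB⟩, -⟩ := K_isGreatest (g := g) h𝒞 hb2
    exact ⟨B, hB, by omega, by rw [hc]⟩
  · rintro x ⟨B, hB, hgB, rfl⟩
    have hcard : B.card ≤ Fintype.card E := Finset.card_le_univ B
    by_contra hlt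
    push_neg at hlt
    have hBb : B.card ≤ b - 1 := by
      have : (B.card : ℤ) < b := hlt
      omega
    have : g B ≤ Kgen g 𝒞 (b - 1) := by
      calc g B ≤ Kgen g 𝒞 B.card := (K_isGreatest h𝒞 hcard).2 ⟨B, hB, rfl, rfl⟩
        _ ≤ Kgen g 𝒞 (b - 1) := K_mono h𝒞 hg hBb (by omega)
    omega

lemma dgen_spec (h𝒞 : ChainSys 𝒞) (hg : IsWDemiMatroid w g) {u : ℤ}
    (hu1 : 1 ≤ u) (hu2 : u ≤ g Finset.univ) :
    ∃ b : ℕ, 1 ≤ b ∧ b ≤ Fintype.card E ∧ dgen g 𝒞 u = b ∧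
      Kgen g 𝒞 (b - 1) < u ∧ u ≤ Kgen g 𝒞 b := by
  have hKm : u ≤ Kgen g 𝒞 (Fintype.card E) := by rw [K_top h𝒞]; exact hu2
  have hex : ∃ b : ℕ, b ≤ Fintype.card E ∧ u ≤ Kgen g 𝒞 b :=
    ⟨Fintype.card E, le_rfl, hKm⟩
  classical
  obtain ⟨b, ⟨hbm, hub⟩, hmin⟩ := Nat.findX hex
  have hb1 : 1 ≤ b := by
    rcases Nat.eq_zero_or_pos b with h | h
    · exfalso; rw [h, K_zero h𝒞 hg] at hub; omega
    · omega
  have hstrict : Kgen g 𝒞 (b - 1) < u := by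
    by_contra hle
    push_neg at hle
    exact absurd ⟨by omega, hle⟩ (hmin (b-1) (by omega))
  obtain ⟨hd, -, -⟩ := dgen_eq_of h𝒞 hg hb1 hbm hstrict hub
  exact ⟨b, hb1, hbm, hd, hstrict, hub⟩

/-- Exactly one integer of a given residue class lies in a window of `w`
consecutive integers. -/
lemma window_exists_unique {w : ℤ} (hw : 1 ≤ w) (a c : ℤ) :
    ∃! t : ℤ, a < t ∧ t ≤ a + w ∧ t ≡ c [ZMOD w] := by
  have hw0 : w ≠ 0 := by omega
  set r := (c - a - 1) % w with hr
  have hr0 : 0 ≤ r := Int.emod_nonneg _ hw0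
  have hrw : r < w := Int.emod_lt_of_pos _ (by omega)
  have hd : c - a - 1 - r = w * ((c - a - 1) / w) := by
    have h := Int.emod_def (c - a - 1) w
    omega
  refine ⟨a + 1 + r, ⟨by omega, by omega, ?_⟩, ?_⟩
  · rw [Int.modEq_iff_dvd]
    exact ⟨(c - a - 1) / w, by omega⟩
  · rintro t ⟨ht1, ht2, ht3⟩
    have h1 : t ≡ a + 1 + r [ZMOD w] := by
      refine ht3.trans ?_
      rw [Int.modEq_iff_dvd]
      exact ⟨-((c - a - 1) / w), by rw [mul_neg, ← hd]; ring⟩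
    rw [Int.modEq_iff_dvd] at h1
    obtain ⟨q, hq⟩ := h1
    have hbound : -w < w * q ∧ w * q < w := by omega
    have hq0 : q = 0 := by
      rcases lt_trichotomy q 0 with h | h | h
      · nlinarith [hbound.1]
      · exact h
      · nlinarith [hbound.2]
    rw [hq0, mul_zero] at hq
    omega

end Aux


section Poset

variable {E : Type*} [Fintype E] [DecidableEq E] [PartialOrder E]

lemma finset_exists_minimal_old (s : Finset E) (hs : s.Nonempty) :
    ∃ x ∈ s, ∀ y ∈ s, ¬ y < x := by
  obtain ⟨x, hx, hm⟩ := Finset.exists_minimal hs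
  exact ⟨x, hx, fun y hy hlt => hlt.not_ge (hm hy hlt.le)⟩

lemma finset_exists_maximal_old (s : Finset E) (hs : s.Nonempty) :
    ∃ x ∈ s, ∀ y ∈ s, ¬ x < y := by
  obtain ⟨x, hx, hm⟩ := Finset.exists_maximal hs
  exact ⟨x, hx, fun y hy hlt => hlt.not_ge (hm hy hlt.le)⟩

lemma chainSys_ideals : ChainSys (idealsOf E) := by
  refine ⟨fun v hv => absurd hv (Finset.notMem_empty v), ?_, ?_⟩
  · intro I hI hne
    obtain ⟨x, hx, hmin⟩ := finset_exists_minimal_old Iᶜ (by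
      rw [Finset.nonempty_iff_ne_empty]
      intro h0
      exact hne ((Finset.compl_eq_empty_iff I).mp h0))
    rw [Finset.mem_compl] at hx
    refine ⟨x, hx, ?_⟩
    intro v hv u huv
    rcases Finset.mem_insert.mp hv with rfl | hvI
    · by_cases hu : u ∈ I
      · exact Finset.mem_insert_of_mem hu
      · have hnlt := hmin u (Finset.mem_compl.mpr hu)
        have : u = v := by
          rcases lt_or_eq_of_le huv with hlt | heq
          · exact absurd hlt hnlt
          · exact heq
        rw [this]; exact Finset.mem_insert_self _ _
    · exact Finset.mem_insert_of_mem (hI v hvI u huv)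
  · intro I hI hne
    obtain ⟨x, hx, hmax⟩ := finset_exists_maximal_old I hne
    refine ⟨x, hx, ?_⟩
    intro v hv u huv
    have hvI : v ∈ I := Finset.mem_of_mem_erase hv
    have hvx : v ≠ x := Finset.ne_of_mem_erase hv
    have huI : u ∈ I := hI v hvI u huv
    refine Finset.mem_erase.mpr ⟨?_, huI⟩
    rintro rfl
    exact hmax v hvI (lt_of_le_of_ne huv (Ne.symm hvx))

lemma chainSys_duals : ChainSys (dualIdealsOf E) := by
  refine ⟨fun v hv => absurd hv (Finset.notMem_empty v), ?_, ?_⟩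
  · intro I hI hne
    obtain ⟨x, hx, hmax⟩ := finset_exists_maximal_old Iᶜ (by
      rw [Finset.nonempty_iff_ne_empty]
      intro h0
      exact hne ((Finset.compl_eq_empty_iff I).mp h0))
    rw [Finset.mem_compl] at hx
    refine ⟨x, hx, ?_⟩
    intro v hv u huv
    rcases Finset.mem_insert.mp hv with rfl | hvI
    · by_cases hu : u ∈ I
      · exact Finset.mem_insert_of_mem hu
      · have hnlt := hmax u (Finset.mem_compl.mpr hu)
        have : v = u := by
          rcases lt_or_eq_of_le huv with hlt | heq
          · exact absurd hlt hnlt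
          · exact heq
        rw [← this]; exact Finset.mem_insert_self _ _
    · exact Finset.mem_insert_of_mem (hI v hvI u huv)
  · intro I hI hne
    obtain ⟨x, hx, hmin⟩ := finset_exists_minimal_old I hne
    refine ⟨x, hx, ?_⟩
    intro v hv u huv
    have hvI : v ∈ I := Finset.mem_of_mem_erase hv
    have hvx : v ≠ x := Finset.ne_of_mem_erase hv
    have huI : u ∈ I := hI v hvI u huv
    refine Finset.mem_erase.mpr ⟨?_, huI⟩
    rintro rfl
    exact hmin v hvI (lt_of_le_of_ne huv hvx)

lemma compl_mem_duals {B : Finset E} (hB : B ∈ idealsOf E) :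
    Bᶜ ∈ dualIdealsOf E := by
  intro v hv u huv
  rw [Finset.mem_compl] at hv ⊢
  exact fun hu => hv (hB u hu v huv)

lemma compl_mem_ideals {B : Finset E} (hB : B ∈ dualIdealsOf E) :
    Bᶜ ∈ idealsOf E := by
  intro v hv u huv
  rw [Finset.mem_compl] at hv ⊢
  exact fun hu => hv (hB u hu v huv)

end Poset

/-- Theorem 4.2: Wei-type duality for `w`-demi-matroids with respect to a poset
`P` on `E` and its dual poset. -/
theorem stmt_16 {E : Type*} [Fintype E] [DecidableEq E] [PartialOrder E]
    (m : ℕ) (hm : Fintype.card E = m) (w : ℤ) (hw : 1 ≤ w)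
    (f : Finset E → ℤ) (hf : IsWDemiMatroid w f)
    (k : ℤ) (hk : f Finset.univ = k)
    (h : Finset E → ℤ)
    (hh : ∀ B : Finset E, h B = f Bᶜ + w * B.card - k) :
    (∀ l : ℕ, l ≤ m →
      Kgen h (dualIdealsOf E) l = Kgen f (idealsOf E) (m - l) + w * l - k) ∧
    (∀ γ : ℤ,
      {x | ∃ u, 1 ≤ u ∧ u ≤ k ∧ u ≡ γ + k [ZMOD w] ∧
          dgen f (idealsOf E) u = x} ∩
        {x | ∃ v, 1 ≤ v ∧ v ≤ w * m - k ∧ v ≡ γ [ZMOD w] ∧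
          (m : ℤ) + 1 - dgen h (dualIdealsOf E) v = x} = ∅ ∧
      {x | ∃ u, 1 ≤ u ∧ u ≤ k ∧ u ≡ γ + k [ZMOD w] ∧
          dgen f (idealsOf E) u = x} ∪
        {x | ∃ v, 1 ≤ v ∧ v ≤ w * m - k ∧ v ≡ γ [ZMOD w] ∧
          (m : ℤ) + 1 - dgen h (dualIdealsOf E) v = x} = Set.Icc 1 (m : ℤ)) := by
  subst hm
  set m := Fintype.card E with hm
  have hcs : ChainSys (idealsOf E) := chainSys_ideals
  have hcs' : ChainSys (dualIdealsOf E) := chainSys_duals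
  -- `h` is itself a `w`-demi-matroid
  have hh' : IsWDemiMatroid w h := by
    constructor
    · rw [hh ∅, Finset.compl_empty, hk]
      simp
    · intro A B hAB
      have hBA : Bᶜ ⊆ Aᶜ := Finset.compl_subset_compl.mpr hAB
      have hstep := hf.2 Bᶜ Aᶜ hBA
      have hcA : (Aᶜ.card : ℤ) = (m : ℤ) - A.card := by
        rw [Finset.card_compl]
        have := Finset.card_le_univ A
        push_cast [Nat.cast_sub this]
        simp [hm]
      have hcB : (Bᶜ.card : ℤ) = (m : ℤ) - B.card := by
        rw [Finset.card_compl]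
        have := Finset.card_le_univ B
        push_cast [Nat.cast_sub this]
        simp [hm]
      have he : (Aᶜ.card : ℤ) - Bᶜ.card = (B.card : ℤ) - A.card := by
        rw [hcA, hcB]; ring
      rw [he] at hstep
      rw [hh A, hh B]
      constructor
      · nlinarith [hstep.2]
      · nlinarith [hstep.1]
  have huk : h Finset.univ = w * m - k := by
    rw [hh, Finset.compl_univ, hf.1, Finset.card_univ]
    ring
  -- Part 1
  have part1 : ∀ l : ℕ, l ≤ m →
      Kgen h (dualIdealsOf E) l = Kgen f (idealsOf E) (m - l) + w * l - k := by
    intro l hl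
    refine IsGreatest.csSup_eq ⟨?_, ?_⟩
    · obtain ⟨⟨C, hC, hcC, hfC⟩, -⟩ :=
        K_isGreatest (g := f) hcs (Nat.sub_le m l)
      have hccC : Cᶜ.card = l := by
        rw [Finset.card_compl, hcC]
        omega
      refine ⟨Cᶜ, compl_mem_duals hC, hccC, ?_⟩
      rw [hh, compl_compl, hfC, hccC]
    · rintro x ⟨B, hB, hcB, rfl⟩
      have h1 : Bᶜ ∈ idealsOf E := compl_mem_ideals hB
      have h2 : Bᶜ.card = m - l := by rw [Finset.card_compl, hcB]
      have h3 : f Bᶜ ≤ Kgen f (idealsOf E) (m - l) :=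
        (K_isGreatest hcs (Nat.sub_le m l)).2 ⟨Bᶜ, h1, h2, rfl⟩
      rw [hh, hcB]
      omega
  refine ⟨part1, ?_⟩
  intro γ
  set K := Kgen f (idealsOf E) with hK
  set K' := Kgen h (dualIdealsOf E) with hK'
  -- characterization of the first set
  have charD : ∀ x : ℤ,
      (∃ u, 1 ≤ u ∧ u ≤ k ∧ u ≡ γ + k [ZMOD w] ∧ dgen f (idealsOf E) u = x) ↔
      (∃ b : ℕ, 1 ≤ b ∧ b ≤ m ∧ (b : ℤ) = x ∧
        ∃ u, u ≡ γ + k [ZMOD w] ∧ K (b - 1) < u ∧ u ≤ K b) := by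
    intro x
    constructor
    · rintro ⟨u, hu1, hu2, humod, hux⟩
      obtain ⟨b, hb1, hb2, hd, hlt, hle⟩ :=
        dgen_spec hcs hf hu1 (by rw [hk]; exact hu2)
      exact ⟨b, hb1, hb2, by rw [← hux, hd], u, humod, hlt, hle⟩
    · rintro ⟨b, hb1, hb2, hbx, u, humod, hlt, hle⟩
      obtain ⟨hd, hu1, hu2⟩ := dgen_eq_of hcs hf hb1 hb2 hlt hle
      exact ⟨u, hu1, by rwa [hk] at hu2, humod, by rw [hd, hbx]⟩
  -- characterization of the second set
  have charD' : ∀ x : ℤ,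
      (∃ v, 1 ≤ v ∧ v ≤ w * m - k ∧ v ≡ γ [ZMOD w] ∧
        (m : ℤ) + 1 - dgen h (dualIdealsOf E) v = x) ↔
      (∃ b : ℕ, 1 ≤ b ∧ b ≤ m ∧ (b : ℤ) = x ∧
        ∃ u, u ≡ γ + k [ZMOD w] ∧ K b < u ∧ u ≤ K (b - 1) + w) := by
    intro x
    have cast1 : ∀ b : ℕ, 1 ≤ b → b ≤ m →
        K' (m - b) = K b + w * ((m - b : ℕ) : ℤ) - k := by
      intro b hb1 hb2
      have e1 : m - (m - b) = b := by omega
      have := part1 (m - b) (by omega)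
      rw [e1] at this
      exact this
    have cast2 : ∀ b : ℕ, 1 ≤ b → b ≤ m →
        K' (m - b + 1) = K (b - 1) + w * ((m - b : ℕ) : ℤ) + w - k := by
      intro b hb1 hb2
      have e1 : m - (m - b + 1) = b - 1 := by omega
      have := part1 (m - b + 1) (by omega)
      rw [e1] at this
      rw [this]
      have e2 : ((m - b + 1 : ℕ) : ℤ) = ((m - b : ℕ) : ℤ) + 1 := by push_cast; ring
      rw [e2]
      ring
    constructor
    · rintro ⟨v, hv1, hv2, hvmod, hvx⟩
      obtain ⟨b', hb'1, hb'2, hd, hlt, hle⟩ :=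
        dgen_spec hcs' hh' hv1 (by rw [huk]; exact hv2)
      set b : ℕ := m + 1 - b' with hb
      have hbb : 1 ≤ b ∧ b ≤ m := by omega
      have e1 : b' - 1 = m - b := by omega
      have e2 : b' = m - b + 1 := by omega
      rw [e1] at hlt
      rw [e2] at hle
      have hlt : K' (m - b) < v := hlt
      have hle : v ≤ K' (m - b + 1) := hle
      rw [cast1 b hbb.1 hbb.2] at hlt
      rw [cast2 b hbb.1 hbb.2] at hle
      refine ⟨b, hbb.1, hbb.2, by rw [← hvx, hd]; push_cast; omega, ?_⟩
      refine ⟨v + k - w * ((m - b : ℕ) : ℤ), ?_, by omega, by omega⟩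
      have h0 : w * ((m - b : ℕ) : ℤ) ≡ 0 [ZMOD w] :=
        (Int.modEq_zero_iff_dvd).mpr ⟨_, rfl⟩
      have h1 : v + k - w * ((m - b : ℕ) : ℤ) ≡ v + k - 0 [ZMOD w] :=
        (Int.ModEq.refl (v + k)).sub h0
      rw [sub_zero] at h1
      exact h1.trans (hvmod.add_right k)
    · rintro ⟨b, hb1, hb2, hbx, u, humod, hlt, hle⟩
      set v : ℤ := u - k + w * ((m - b : ℕ) : ℤ) with hv
      set b' : ℕ := m - b + 1 with hb'
      have e1 : b' - 1 = m - b := by omega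
      have hKlt : K' (b' - 1) < v := by
        rw [e1, cast1 b hb1 hb2]
        omega
      have hKle : v ≤ K' b' := by
        rw [hb', cast2 b hb1 hb2]
        omega
      obtain ⟨hd, hv1, hv2⟩ := dgen_eq_of hcs' hh' (by omega) (by omega) hKlt hKle
      refine ⟨v, hv1, by rwa [huk] at hv2, ?_, ?_⟩
      · have h0 : w * ((m - b : ℕ) : ℤ) ≡ 0 [ZMOD w] :=
          (Int.modEq_zero_iff_dvd).mpr ⟨_, rfl⟩
        have h1 : v ≡ u - k + 0 [ZMOD w] := (Int.ModEq.refl (u - k)).add h0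
        rw [add_zero] at h1
        have h2 : u - k ≡ γ + k - k [ZMOD w] := humod.sub_right k
        rw [add_sub_cancel_right] at h2
        exact h1.trans h2
      · rw [hd, ← hbx]
        push_cast
        omega
  constructor
  · -- the intersection is empty
    rw [Set.eq_empty_iff_forall_notMem]
    rintro x ⟨hx1, hx2⟩
    obtain ⟨b₁, hb₁1, hb₁2, hb₁x, u₁, hu₁mod, hu₁lt, hu₁le⟩ := (charD x).mp hx1
    obtain ⟨b₂, hb₂1, hb₂2, hb₂x, u₂, hu₂mod, hu₂lt, hu₂le⟩ := (charD' x).mp hx2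
    have hbeq : b₁ = b₂ := by omega
    subst hbeq
    have hmono : K (b₁ - 1) ≤ K b₁ := K_mono hcs hf (by omega) hb₁2
    have hstep : K b₁ ≤ K (b₁ - 1) + w := by
      have e : b₁ - 1 + 1 = b₁ := by omega
      have := K_step (g := f) hcs hf (b := b₁ - 1) (by omega)
      rwa [e] at this
    obtain ⟨t, -, huniq⟩ := window_exists_unique hw (K (b₁ - 1)) (γ + k)
    have h1 : u₁ = t := huniq u₁ ⟨hu₁lt, by omega, hu₁mod⟩
    have h2 : u₂ = t := huniq u₂ ⟨by omega, by omega, hu₂mod⟩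
    omega
  · -- the union is the full interval
    ext x
    simp only [Set.mem_union, Set.mem_setOf_eq, Set.mem_Icc]
    constructor
    · rintro (hx | hx)
      · obtain ⟨b, hb1, hb2, hbx, -⟩ := (charD x).mp hx
        omega
      · obtain ⟨b, hb1, hb2, hbx, -⟩ := (charD' x).mp hx
        omega
    · rintro ⟨hx1, hx2⟩
      set b : ℕ := x.toNat with hb
      have hbx : (b : ℤ) = x := by omega
      have hb1 : 1 ≤ b := by omega
      have hb2 : b ≤ m := by omega
      obtain ⟨t, ⟨ht1, ht2, ht3⟩, -⟩ := window_exists_unique hw (K (b - 1)) (γ + k)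
      rcases le_or_gt t (K b) with hcase | hcase
      · exact Or.inl ((charD x).mpr ⟨b, hb1, hb2, hbx, t, ht3, ht1, hcase⟩)
      · exact Or.inr ((charD' x).mpr ⟨b, hb1, hb2, hbx, t, ht3, hcase, by omega⟩)
end

section
/- Let A be a finite chain ring, E a finite set, and C ⊆ A^E a right linear code with t = rank(C). Define f: 2^E → ℤ by f(J) = rank(C ∩ δ(J)), where δ(J) = {α ∈ A^E : α_i = 0 for all i ∉ J}. Then (E, f) is a demi-matroid with f(E) = t; that is, f(∅) = 0 and 0 ≤ f(D) - f(B) ≤ |D| - |B| for all B ⊆ D ⊆ E. -/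
set_option linter.unusedSectionVars false

open Submodule

section RingFacts
variable {A : Type*} [Ring A] [Fintype A]

lemma isUnit_of_left_inv {a b : A} (h : a * b = 1) : IsUnit b := by
  have hinj : Function.Injective (fun y : A => b * y) := by
    intro y z hyz
    have h2 : a * (b * y) = a * (b * z) := by simpa using congrArg (a * ·) hyz
    simpa [← mul_assoc, h] using h2
  obtain ⟨s, hs⟩ := (Finite.injective_iff_surjective.mp hinj) 1
  have hs' : b * s = 1 := hs
  have hsa : s = a := by
    have h3 : a * (b * s) = a * 1 := by rw [hs']
    simpa [← mul_assoc, h] using h3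
  exact ⟨⟨b, a, by rw [← hsa]; exact hs', h⟩, rfl⟩

lemma isUnit_of_right_inv {a b : A} (h : a * b = 1) : IsUnit a := by
  have hinj : Function.Injective (fun y : A => y * a) := by
    intro y z hyz
    have h2 : (y * a) * b = (z * a) * b := by simpa using congrArg (· * b) hyz
    simpa [mul_assoc, h] using h2
  obtain ⟨s, hs⟩ := (Finite.injective_iff_surjective.mp hinj) 1
  have hs' : s * a = 1 := hs
  have hsb : s = b := by
    have h3 : (s * a) * b = 1 * b := by rw [hs']
    simpa [mul_assoc, h] using h3
  exact ⟨⟨a, b, h, by rw [← hsb]; exact hs'⟩, rfl⟩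

lemma not_isUnit_mul_left {x : A} (hx : ¬IsUnit x) (r : A) : ¬IsUnit (r * x) := by
  intro hu
  obtain ⟨u, hu'⟩ := hu
  have : (↑u⁻¹ * r) * x = 1 := by
    rw [mul_assoc, ← hu']
    exact u.inv_val
  exact hx (isUnit_of_left_inv this)

lemma not_isUnit_mul_right {x : A} (hx : ¬IsUnit x) (r : A) : ¬IsUnit (x * r) := by
  intro hu
  obtain ⟨u, hu'⟩ := hu
  have : x * (r * ↑u⁻¹) = 1 := by
    rw [← mul_assoc, ← hu']
    exact u.val_inv
  exact hx (isUnit_of_right_inv this)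

variable (hch : ∀ I J : Ideal A, I ≤ J ∨ J ≤ I) [Nontrivial A]

include hch

lemma nonunit_add {x y : A} (hx : ¬IsUnit x) (hy : ¬IsUnit y) : ¬IsUnit (x + y) := by
  rcases hch (Ideal.span {x}) (Ideal.span {y}) with h | h
  · obtain ⟨a, ha⟩ := Ideal.mem_span_singleton'.mp (h (Ideal.mem_span_singleton_self x))
    -- a * y = x
    have : x + y = (a + 1) * y := by rw [add_mul, one_mul, ha]
    rw [this]; exact not_isUnit_mul_left hy _
  · obtain ⟨a, ha⟩ := Ideal.mem_span_singleton'.mp (h (Ideal.mem_span_singleton_self y))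
    have : x + y = (a + 1) * x := by rw [add_mul, one_mul, ha, add_comm]
    rw [this]; exact not_isUnit_mul_left hx _

/-- the maximal ideal of nonunits -/
noncomputable def mIdeal : Ideal A where
  carrier := {x | ¬IsUnit x}
  add_mem' := fun ha hb => nonunit_add hch ha hb
  zero_mem' := by simp [isUnit_zero_iff, zero_ne_one]
  smul_mem' := fun c x hx => by simpa using not_isUnit_mul_left hx c

lemma mem_mIdeal {x : A} : x ∈ mIdeal hch ↔ ¬IsUnit x := Iff.rfl

lemma unit_of_one_sub {z : A} (hz : ¬IsUnit z) : IsUnit (1 - z) := by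
  by_contra h
  have : ¬IsUnit ((1 - z) + z) := nonunit_add hch h hz
  simp at this

lemma ideal_principal (I : Ideal A) : ∃ g, I = Ideal.span {g} := by
  classical
  have hfin : (I : Set A).Finite := Set.toFinite _
  obtain ⟨g, hg, hmax⟩ := Finset.exists_max_image hfin.toFinset
    (fun y => (Ideal.span {y} : Set A).ncard) ⟨0, hfin.mem_toFinset.mpr I.zero_mem⟩
  refine ⟨g, le_antisymm ?_ ?_⟩
  · intro y hy
    rcases hch (Ideal.span {y}) (Ideal.span {g}) with h | h
    · exact h (Ideal.mem_span_singleton_self y)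
    · have hss : (Ideal.span {g} : Set A) = (Ideal.span {y} : Set A) :=
        Set.eq_of_subset_of_ncard_le h (hmax y (hfin.mem_toFinset.mpr hy)) (Set.toFinite _)
      have : y ∈ (Ideal.span {y} : Set A) := Ideal.mem_span_singleton_self y
      rw [← hss] at this
      exact this
  · rw [Ideal.span_le, Set.singleton_subset_iff]
    exact hfin.mem_toFinset.mp hg

end RingFacts
/-- The rank of a module `V`: the minimum number of generators. -/
noncomputable def minGen {R M : Type*} [Ring R] [AddCommGroup M] [Module R M]
    (V : Submodule R M) : ℕ :=
  sInf {n | ∃ s : Finset M, s.card = n ∧ Submodule.span R (↑s : Set M) = V}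

/-- `δ(J) = {α ∈ A^E : α_i = 0 for all i ∉ J}`, as a right `A`-submodule. -/
def deltaSub (A : Type*) [Ring A] (E : Type*) (J : Finset E) :
    Submodule Aᵐᵒᵖ (E → A) :=
  Submodule.pi {i | i ∉ J} (fun _ => ⊥)
section RingFacts2
variable {A : Type*} [Ring A] [Fintype A]
variable (hch : ∀ I J : Ideal A, I ≤ J ∨ J ≤ I) [Nontrivial A] {θ : A}

include hch

lemma theta_nonunit (hθ : mIdeal hch = Ideal.span {θ}) : ¬IsUnit θ := by
  have : θ ∈ mIdeal hch := by rw [hθ]; exact Ideal.mem_span_singleton_self θ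
  exact this

lemma mem_m_iff (hθ : mIdeal hch = Ideal.span {θ}) {x : A} (hx : ¬IsUnit x) :
    ∃ a, x = a * θ := by
  have hx' : x ∈ Ideal.span {θ} := by rw [← hθ]; exact hx
  obtain ⟨a, ha⟩ := Ideal.mem_span_singleton'.mp hx'
  exact ⟨a, ha.symm⟩

lemma exists_nilpotent (hθ : mIdeal hch = Ideal.span {θ}) : ∃ n, θ ^ n = 0 := by
  by_contra h
  push_neg at h
  set g : ℕ → ℕ := fun k => (Ideal.span {θ ^ k} : Set A).ncard with hg
  have hstrict : ∀ k : ℕ, g (k + 1) < g k := by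
    intro k
    have hsub : (Ideal.span {θ ^ (k+1)} : Set A) ⊆ (Ideal.span {θ ^ k} : Set A) := by
      intro y hy
      obtain ⟨a, ha⟩ := Ideal.mem_span_singleton'.mp hy
      refine Ideal.mem_span_singleton'.mpr ⟨a * θ, ?_⟩
      rw [mul_assoc, ← pow_succ']
      exact ha
    have hne : (Ideal.span {θ ^ (k+1)} : Set A) ≠ (Ideal.span {θ ^ k} : Set A) := by
      intro heq
      have hmem : θ ^ k ∈ (Ideal.span {θ ^ (k+1)} : Set A) := by
        rw [heq]; exact Ideal.mem_span_singleton_self _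
      obtain ⟨a, ha⟩ := Ideal.mem_span_singleton'.mp hmem
      have h1 : (1 - a * θ) * θ ^ k = 0 := by
        have h2 : a * θ ^ (k+1) = (a * θ) * θ ^ k := by rw [mul_assoc, ← pow_succ']
        rw [sub_mul, one_mul, ← h2, ha, sub_self]
      have hu : IsUnit (1 - a * θ) :=
        unit_of_one_sub hch (not_isUnit_mul_left (theta_nonunit hch hθ) a)
      exact h k (hu.mul_left_cancel (by rw [h1, mul_zero]))
    have hf : (Ideal.span {θ ^ (k+1)} : Set A).Finite := Set.toFinite _
    exact (Set.ncard_lt_ncard (hsub.ssubset_of_ne hne) (Set.toFinite _))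
  have hdesc : ∀ k : ℕ, g k + k ≤ g 0 := by
    intro k
    induction k with
    | zero => omega
    | succ k ih => have := hstrict k; omega
  have := hdesc (g 0 + 1)
  omega

lemma rep_aux (hθ : mIdeal hch = Ideal.span {θ}) (n : ℕ) (hn : θ ^ n = 0) :
    ∀ (d k : ℕ) (x a : A), k + d = n → x = a * θ ^ k → x ≠ 0 →
      ∃ i u, IsUnit u ∧ x = u * θ ^ i := by
  intro d
  induction d with
  | zero =>
    intro k x a hk hx hx0
    exfalso
    apply hx0
    have : k = n := by omega
    rw [hx, this, hn, mul_zero]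
  | succ d ih =>
    intro k x a hk hx hx0
    by_cases ha : IsUnit a
    · exact ⟨k, a, ha, hx⟩
    · obtain ⟨b, hb⟩ := mem_m_iff hch hθ ha
      refine ih (k+1) x b (by omega) ?_ hx0
      rw [pow_succ', ← mul_assoc, ← hb]
      exact hx

lemma exists_rep_s19 (hθ : mIdeal hch = Ideal.span {θ}) (n : ℕ) (hn : θ ^ n = 0)
    {x : A} (hx : x ≠ 0) : ∃ i u, IsUnit u ∧ x = u * θ ^ i :=
  rep_aux hch hθ n hn n 0 x x (by omega) (by simp) hx

lemma theta_pow_mul (hθ : mIdeal hch = Ideal.span {θ}) (i : ℕ) (r : A) :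
    ∃ b, θ ^ i * r = b * θ ^ i := by
  induction i with
  | zero => exact ⟨r, by simp⟩
  | succ i ih =>
    obtain ⟨b, hb⟩ := ih
    obtain ⟨c, hc⟩ := mem_m_iff hch hθ
      (not_isUnit_mul_right (theta_nonunit hch hθ) b)
    refine ⟨c, ?_⟩
    calc θ ^ (i+1) * r = θ * (θ ^ i * r) := by rw [pow_succ', mul_assoc]
    _ = θ * (b * θ ^ i) := by rw [hb]
    _ = (θ * b) * θ ^ i := by rw [mul_assoc]
    _ = (c * θ) * θ ^ i := by rw [← hc]
    _ = c * θ ^ (i+1) := by rw [mul_assoc, ← pow_succ']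

lemma theta_pow_unit_comm (hθ : mIdeal hch = Ideal.span {θ}) {i : ℕ} (hi : θ ^ i ≠ 0)
    {v : A} (hv : IsUnit v) : ∃ w, IsUnit w ∧ θ ^ i * v = w * θ ^ i := by
  obtain ⟨w, hw⟩ := theta_pow_mul hch hθ i v
  by_cases hwu : IsUnit w
  · exact ⟨w, hwu, hw⟩
  exfalso
  obtain ⟨c, hc⟩ := mem_m_iff hch hθ hwu
  obtain ⟨u, rfl⟩ := hv
  obtain ⟨d, hd⟩ := theta_pow_mul hch hθ (i+1) (↑u⁻¹)
  have key : θ ^ i = (c * d * θ) * θ ^ i := by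
    calc θ ^ i = (θ ^ i * ↑u) * ↑u⁻¹ := by rw [mul_assoc, u.mul_inv, mul_one]
    _ = (w * θ ^ i) * ↑u⁻¹ := by rw [hw]
    _ = ((c * θ) * θ ^ i) * ↑u⁻¹ := by rw [← hc]
    _ = c * (θ ^ (i+1) * ↑u⁻¹) := by rw [pow_succ']; simp only [mul_assoc]
    _ = c * (d * θ ^ (i+1)) := by rw [hd]
    _ = (c * d * θ) * θ ^ i := by rw [pow_succ']; simp only [mul_assoc]
  have h0 : (1 - c * d * θ) * θ ^ i = 0 := by
    rw [sub_mul, one_mul, ← key, sub_self]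
  have hu2 : IsUnit (1 - c * d * θ) :=
    unit_of_one_sub hch (not_isUnit_mul_left (theta_nonunit hch hθ) (c * d))
  exact hi (hu2.mul_left_cancel (by rw [h0, mul_zero]))

lemma ann_left (hθ : mIdeal hch = Ideal.span {θ}) (n : ℕ) (hn : θ ^ n = 0)
    (hmin : ∀ m < n, θ ^ m ≠ 0) {i : ℕ} (hi : i ≤ n) {r : A} :
    r * θ ^ i = 0 ↔ ∃ a, r = a * θ ^ (n - i) := by
  constructor
  · intro h
    by_cases hr : r = 0
    · exact ⟨0, by simp [hr]⟩
    obtain ⟨j, u, hu, rfl⟩ := exists_rep_s19 hch hθ n hn hr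
    have h2 : θ ^ (j + i) = 0 := by
      have h3 : u * θ ^ (j + i) = 0 := by rw [pow_add, ← mul_assoc]; exact h
      exact hu.mul_left_cancel (by rw [h3, mul_zero])
    have hji : n ≤ j + i := by
      by_contra hlt; push_neg at hlt; exact hmin _ hlt h2
    refine ⟨u * θ ^ (j - (n - i)), ?_⟩
    rw [mul_assoc, ← pow_add]
    have hj : j - (n - i) + (n - i) = j := by omega
    rw [hj]
  · rintro ⟨a, rfl⟩
    rw [mul_assoc, ← pow_add]
    have h4 : n - i + i = n := by omega
    rw [h4, hn, mul_zero]

lemma ann_right (hθ : mIdeal hch = Ideal.span {θ}) (n : ℕ) (hn : θ ^ n = 0)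
    (hmin : ∀ m < n, θ ^ m ≠ 0) {i : ℕ} (hi : i ≤ n) {r : A} :
    θ ^ i * r = 0 ↔ ∃ a, r = a * θ ^ (n - i) := by
  constructor
  · intro h
    by_cases hr : r = 0
    · exact ⟨0, by simp [hr]⟩
    obtain ⟨j, u, hu, rfl⟩ := exists_rep_s19 hch hθ n hn hr
    by_cases hiz : θ ^ i = 0
    · have hieq : i = n := by
        by_contra hne
        exact hmin i (lt_of_le_of_ne hi hne) hiz
      refine ⟨u * θ ^ j, ?_⟩
      rw [hieq, Nat.sub_self, pow_zero, mul_one]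
    · obtain ⟨w, hwu, hw⟩ := theta_pow_unit_comm hch hθ hiz hu
      have h2 : w * θ ^ (i + j) = 0 := by
        rw [pow_add, ← mul_assoc, ← hw, mul_assoc]
        exact h
      have h3 : θ ^ (i + j) = 0 := hwu.mul_left_cancel (by rw [h2, mul_zero])
      have hji : n ≤ i + j := by
        by_contra hlt; push_neg at hlt; exact hmin _ hlt h3
      refine ⟨u * θ ^ (j - (n - i)), ?_⟩
      rw [mul_assoc, ← pow_add]
      have hj : j - (n - i) + (n - i) = j := by omega
      rw [hj]
  · rintro ⟨a, rfl⟩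
    obtain ⟨b, hb⟩ := theta_pow_mul hch hθ i a
    rw [← mul_assoc, hb, mul_assoc, ← pow_add]
    have h4 : i + (n - i) = n := by omega
    rw [h4, hn, mul_zero]

lemma mul_theta_pow_comm (hθ : mIdeal hch = Ideal.span {θ}) (n : ℕ) (hn : θ ^ n = 0)
    (hmin : ∀ m < n, θ ^ m ≠ 0) (i : ℕ) (a : A) : ∃ b, a * θ ^ i = θ ^ i * b := by
  by_cases hi : i ≤ n
  · classical
    set ψL := AddMonoidHom.mulRight (θ ^ i) with hψL
    set ψR := AddMonoidHom.mulLeft (θ ^ i) with hψR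
    have hkers : ψL.ker = ψR.ker := by
      ext r
      simp only [AddMonoidHom.mem_ker, hψL, hψR]
      show r * θ ^ i = 0 ↔ θ ^ i * r = 0
      rw [ann_left hch hθ n hn hmin hi, ann_right hch hθ n hn hmin hi]
    have hcard : Nat.card ψL.range = Nat.card ψR.range := by
      have h1 := AddSubgroup.card_eq_card_quotient_mul_card_addSubgroup ψL.ker
      have h2 := AddSubgroup.card_eq_card_quotient_mul_card_addSubgroup ψR.ker
      have e1 : Nat.card (A ⧸ ψL.ker) = Nat.card ψL.range :=
        Nat.card_congr (QuotientAddGroup.quotientKerEquivRange ψL).toEquiv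
      have e2 : Nat.card (A ⧸ ψR.ker) = Nat.card ψR.range :=
        Nat.card_congr (QuotientAddGroup.quotientKerEquivRange ψR).toEquiv
      rw [hkers] at h1 e1
      have hpos : 0 < Nat.card ψR.ker := Nat.card_pos
      rw [e1] at h1; rw [e2] at h2
      have := h1.symm.trans h2
      exact Nat.eq_of_mul_eq_mul_right hpos this
    have hsub : (ψR.range : Set A) ⊆ (ψL.range : Set A) := by
      rintro x ⟨r, rfl⟩
      obtain ⟨b, hb⟩ := theta_pow_mul hch hθ i r
      exact ⟨b, hb.symm⟩
    have heq : (ψR.range : Set A) = (ψL.range : Set A) := by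
      apply Set.eq_of_subset_of_ncard_le hsub
      rw [← Nat.card_coe_set_eq, ← Nat.card_coe_set_eq]
      exact le_of_eq hcard
    have hmem : a * θ ^ i ∈ (ψL.range : Set A) := ⟨a, rfl⟩
    rw [← heq] at hmem
    obtain ⟨b, hb⟩ := hmem
    exact ⟨b, hb.symm⟩
  · have hz : θ ^ i = 0 := by
      have : i = n + (i - n) := by omega
      rw [this, pow_add, hn, zero_mul]
    exact ⟨0, by simp [hz]⟩

end RingFacts2
section Cyclic
variable {A : Type*} [Ring A] [Fintype A]

lemma submodule_cyclic (hch : ∀ I J : Ideal A, I ≤ J ∨ J ≤ I)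
    (I : Submodule Aᵐᵒᵖ A) : ∃ g : A, I = Submodule.span Aᵐᵒᵖ {g} := by
  classical
  rcases subsingleton_or_nontrivial A with hs | hnt
  · refine ⟨0, ?_⟩
    rw [Submodule.span_zero_singleton]
    ext x
    simp only [Submodule.mem_bot]
    exact iff_of_true (by rw [Subsingleton.elim x 0]; exact I.zero_mem) (Subsingleton.elim x 0)
  obtain ⟨θ, hθ⟩ := ideal_principal hch (mIdeal hch)
  have hex : ∃ n, θ ^ n = 0 := exists_nilpotent hch hθ
  obtain ⟨n, hn, hmin⟩ : ∃ n, θ ^ n = 0 ∧ ∀ m < n, θ ^ m ≠ 0 :=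
    ⟨Nat.find hex, Nat.find_spec hex, fun m hm => Nat.find_min hex hm⟩
  by_cases hI : I = ⊥
  · exact ⟨0, by rw [hI, Submodule.span_zero_singleton]⟩
  obtain ⟨x1, hx1I, hx1⟩ := (Submodule.ne_bot_iff I).mp hI
  set S : Set ℕ := {i | ∃ x ∈ I, x ≠ 0 ∧ ∃ u, IsUnit u ∧ x = u * θ ^ i} with hSdef
  have hS : S.Nonempty := by
    obtain ⟨i, u, hu, hx⟩ := exists_rep_s19 hch hθ n hn hx1
    exact ⟨i, x1, hx1I, hx1, u, hu, hx⟩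
  obtain ⟨x₀, hx₀I, hx₀0, u₀, hu₀, hx₀⟩ := Nat.sInf_mem hS
  obtain ⟨u, rfl⟩ := hu₀
  refine ⟨x₀, le_antisymm ?_ ?_⟩
  · intro y hy
    by_cases hy0 : y = 0
    · rw [hy0]; exact Submodule.zero_mem _
    obtain ⟨j, v, hv, hyv⟩ := exists_rep_s19 hch hθ n hn hy0
    have hj : sInf S ≤ j := Nat.sInf_le ⟨y, hy, hy0, v, hv, hyv⟩
    set c : A := ↑u⁻¹ * (v * θ ^ (j - sInf S)) with hc
    obtain ⟨b, hb⟩ := mul_theta_pow_comm hch hθ n hn hmin (sInf S) c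
    refine Submodule.mem_span_singleton.mpr ⟨MulOpposite.op b, ?_⟩
    show x₀ * b = y
    have hd : j - sInf S + sInf S = j := by omega
    calc x₀ * b = ↑u * (θ ^ (sInf S) * b) := by rw [hx₀, mul_assoc]
    _ = ↑u * (c * θ ^ (sInf S)) := by rw [← hb]
    _ = (↑u * ↑u⁻¹) * (v * (θ ^ (j - sInf S) * θ ^ (sInf S))) := by
        rw [hc]; simp only [mul_assoc]
    _ = v * θ ^ j := by rw [u.mul_inv, one_mul, ← pow_add, hd]
    _ = y := hyv.symm
  · rw [Submodule.span_le, Set.singleton_subset_iff]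
    exact hx₀I

end Cyclic
section ModuleFacts
open Submodule

variable {R : Type*} [Ring R] {M : Type*} [AddCommGroup M] [Module R M]

lemma minGen_le {V : Submodule R M} {s : Finset M} (hs : span R (↑s : Set M) = V) :
    minGen V ≤ s.card :=
  Nat.sInf_le ⟨s, rfl, hs⟩

lemma exists_minGen [Fintype M] (V : Submodule R M) :
    ∃ s : Finset M, s.card = minGen V ∧ span R (↑s : Set M) = V := by
  classical
  have hne : {n | ∃ s : Finset M, s.card = n ∧ span R (↑s : Set M) = V}.Nonempty :=
    ⟨(V : Set M).toFinset.card, (V : Set M).toFinset, rfl,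
      by rw [Set.coe_toFinset, Submodule.span_eq]⟩
  obtain ⟨s, hc, hs⟩ := Nat.sInf_mem hne
  exact ⟨s, hc.symm ▸ rfl, hs⟩

lemma minGen_bot : minGen (⊥ : Submodule R M) = 0 :=
  Nat.le_zero.mp (le_trans (minGen_le (s := ∅) (by simp)) (by simp))

lemma minGen_le_ker_add_map {M₂ : Type*} [AddCommGroup M₂] [Module R M₂]
    [Fintype M] [Fintype M₂] (φ : M →ₗ[R] M₂) (W : Submodule R M) :
    minGen W ≤ minGen (W ⊓ LinearMap.ker φ) + minGen (W.map φ) := by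
  classical
  obtain ⟨s, hsc, hs⟩ := exists_minGen (W ⊓ LinearMap.ker φ)
  obtain ⟨u, huc, hu⟩ := exists_minGen (W.map φ)
  have hlift : ∀ x : {x // x ∈ u}, ∃ y, y ∈ W ∧ φ y = ↑x := by
    rintro ⟨x, hx⟩
    have : x ∈ W.map φ := by rw [← hu]; exact subset_span hx
    obtain ⟨y, hyW, hyx⟩ := this
    exact ⟨y, hyW, hyx⟩
  choose l hlW hlφ using hlift
  set lifts : Finset M := u.attach.image l with hlifts
  have hliftsW : (↑lifts : Set M) ⊆ (W : Set M) := by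
    intro y hy
    simp only [hlifts, Finset.coe_image, Set.mem_image] at hy
    obtain ⟨x, _, rfl⟩ := hy
    exact hlW x
  have hsW : (↑s : Set M) ⊆ (W : Set M) := by
    intro y hy
    have : y ∈ W ⊓ LinearMap.ker φ := by rw [← hs]; exact subset_span hy
    exact this.1
  have himg : φ '' (↑lifts : Set M) = (↑u : Set M₂) := by
    ext z
    constructor
    · rintro ⟨y, hy, rfl⟩
      simp only [hlifts, Finset.coe_image, Set.mem_image] at hy
      obtain ⟨x, _, rfl⟩ := hy
      rw [hlφ x]; exact x.2
    · intro hz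
      refine ⟨l ⟨z, hz⟩, ?_, hlφ _⟩
      simp only [hlifts, Finset.coe_image, Set.mem_image]
      exact ⟨⟨z, hz⟩, by simp, rfl⟩
  have hspan : span R (↑(s ∪ lifts) : Set M) = W := by
    apply le_antisymm
    · rw [span_le, Finset.coe_union]
      exact Set.union_subset hsW hliftsW
    · intro y hyW
      have hφy : φ y ∈ map φ (span R (↑lifts : Set M)) := by
        rw [← span_image, himg, hu]
        exact mem_map_of_mem hyW
      obtain ⟨z, hz, hzy⟩ := hφy
      have hz1 : y - z ∈ W ⊓ LinearMap.ker φ := by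
        constructor
        · exact sub_mem hyW (by
            have : span R (↑lifts : Set M) ≤ W := span_le.mpr hliftsW
            exact this hz)
        · simp [LinearMap.mem_ker, map_sub, hzy]
      have hz2 : y - z ∈ span R (↑(s ∪ lifts) : Set M) := by
        have : y - z ∈ span R (↑s : Set M) := by rw [hs]; exact hz1
        exact span_mono (by simp [Finset.coe_union]) this
      have hz3 : z ∈ span R (↑(s ∪ lifts) : Set M) :=
        span_mono (by simp [Finset.coe_union]) hz
      simpa using add_mem hz2 hz3
  calc minGen W ≤ (s ∪ lifts).card := minGen_le hspan
  _ ≤ s.card + lifts.card := Finset.card_union_le _ _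
  _ ≤ s.card + u.card := by
      have h5 : lifts.card ≤ u.card := by
        rw [hlifts]
        exact le_trans Finset.card_image_le (le_of_eq Finset.card_attach)
      omega
  _ = minGen (W ⊓ LinearMap.ker φ) + minGen (W.map φ) := by rw [hsc, huc]

end ModuleFacts

section DeltaFacts
open Submodule
variable {A : Type*} [Ring A] {E : Type*}

lemma mem_deltaSub {J : Finset E} {α : E → A} :
    α ∈ deltaSub A E J ↔ ∀ i, i ∉ J → α i = 0 := by
  simp [deltaSub, Submodule.mem_pi]

lemma deltaSub_empty : deltaSub A E (∅ : Finset E) = ⊥ := by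
  ext α
  simp only [mem_deltaSub, Submodule.mem_bot]
  constructor
  · intro h; funext i; exact h i (Finset.notMem_empty i)
  · intro h i _; rw [h]; rfl

lemma deltaSub_univ [Fintype E] : deltaSub A E (Finset.univ : Finset E) = ⊤ := by
  ext α
  simp [mem_deltaSub]

lemma deltaSub_mono {J J' : Finset E} (h : J ⊆ J') : deltaSub A E J ≤ deltaSub A E J' := by
  intro α hα
  rw [mem_deltaSub] at *
  exact fun i hi => hα i (fun hmem => hi (h hmem))

end DeltaFacts
section MainGen
open Submodule

variable {A : Type*} [Ring A] [Fintype A]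

lemma main_gen (hch : ∀ I J : Ideal A, I ≤ J ∨ J ≤ I)
    {E : Type*} [Fintype E] [DecidableEq E]
    (J : Finset E) (N : Submodule Aᵐᵒᵖ (E → A)) (hN : N ≤ deltaSub A E J) :
    ∃ s : Finset (E → A), s.card ≤ J.card ∧ span Aᵐᵒᵖ (↑s : Set (E → A)) = N := by
  classical
  induction J using Finset.induction generalizing N with
  | empty =>
    have hbot : N = ⊥ := by
      rw [eq_bot_iff, ← deltaSub_empty (A := A) (E := E)]
      exact hN
    exact ⟨∅, by simp, by simp [hbot]⟩
  | @insert a J' ha ih =>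
    set π : (E → A) →ₗ[Aᵐᵒᵖ] A := LinearMap.proj a with hπ
    obtain ⟨g, hg⟩ := submodule_cyclic hch (N.map π)
    have hgmem : g ∈ N.map π := by
      rw [hg]; exact subset_span rfl
    obtain ⟨x₀, hx₀N, hx₀⟩ := hgmem
    have hker : N ⊓ LinearMap.ker π ≤ deltaSub A E J' := by
      rintro x ⟨hxN, hxk⟩
      rw [mem_deltaSub]
      intro i hi
      by_cases hia : i = a
      · subst hia
        exact hxk
      · exact mem_deltaSub.mp (hN hxN) i (by simp [Finset.mem_insert, hia, hi])
    obtain ⟨s', hs'c, hs'⟩ := ih _ hker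
    refine ⟨insert x₀ s', ?_, ?_⟩
    · calc (insert x₀ s').card ≤ s'.card + 1 := Finset.card_insert_le _ _
      _ ≤ J'.card + 1 := by omega
      _ = (insert a J').card := (Finset.card_insert_of_notMem ha).symm
    · apply le_antisymm
      · rw [span_le, Finset.coe_insert, Set.insert_subset_iff]
        constructor
        · exact hx₀N
        · intro y hy
          have : y ∈ N ⊓ LinearMap.ker π := by rw [← hs']; exact subset_span hy
          exact this.1
      · intro y hyN
        have hπy : π y ∈ N.map π := mem_map_of_mem hyN
        rw [hg] at hπy
        obtain ⟨c, hc⟩ := mem_span_singleton.mp hπy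
        have hz : y - c • x₀ ∈ N ⊓ LinearMap.ker π := by
          constructor
          · exact sub_mem hyN (Submodule.smul_mem _ _ hx₀N)
          · show y - c • x₀ ∈ LinearMap.ker π
            rw [LinearMap.mem_ker, map_sub, map_smul, hx₀, hc, sub_self]
        have h1 : y - c • x₀ ∈ span Aᵐᵒᵖ (↑(insert x₀ s') : Set (E → A)) := by
          have : y - c • x₀ ∈ span Aᵐᵒᵖ (↑s' : Set (E → A)) := by rw [hs']; exact hz
          exact span_mono (by simp [Finset.coe_insert, Set.subset_insert]) this
        have h2 : c • x₀ ∈ span Aᵐᵒᵖ (↑(insert x₀ s') : Set (E → A)) :=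
          Submodule.smul_mem _ _ (subset_span (by simp [Finset.coe_insert]))
        simpa using add_mem h1 h2

lemma minGen_mono (hch : ∀ I J : Ideal A, I ≤ J ∨ J ≤ I)
    {E : Type*} [Fintype E] [DecidableEq E]
    {V W : Submodule Aᵐᵒᵖ (E → A)} (hVW : V ≤ W) : minGen V ≤ minGen W := by
  classical
  obtain ⟨s, hsc, hs⟩ := exists_minGen W
  let w : {x // x ∈ s} → (E → A) := fun i => ↑i
  let φ : ({x // x ∈ s} → A) →ₗ[Aᵐᵒᵖ] (E → A) :=
    { toFun := fun c => ∑ i, (MulOpposite.op (c i)) • w i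
      map_add' := by
        intro c d
        rw [← Finset.sum_add_distrib]
        apply Finset.sum_congr rfl
        intro i _
        rw [Pi.add_apply, MulOpposite.op_add, add_smul]
      map_smul' := by
        intro m c
        rw [RingHom.id_apply, Finset.smul_sum]
        apply Finset.sum_congr rfl
        intro i _
        have h1 : (m • c) i = c i * m.unop := rfl
        rw [h1, MulOpposite.op_mul, MulOpposite.op_unop, mul_smul] }
  have hφ : ∀ c, φ c = ∑ i, (MulOpposite.op (c i)) • w i := fun c => rfl
  have hrange : LinearMap.range φ = W := by
    apply le_antisymm
    · rintro x ⟨c, rfl⟩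
      rw [hφ]
      apply Submodule.sum_mem
      intro i _
      apply Submodule.smul_mem
      have : (↑i : E → A) ∈ span Aᵐᵒᵖ (↑s : Set (E → A)) := subset_span i.2
      rw [hs] at this
      exact this
    · rw [← hs, span_le]
      intro x hx
      refine ⟨Pi.single (⟨x, hx⟩ : {x // x ∈ s}) 1, ?_⟩
      rw [hφ]
      rw [Finset.sum_eq_single (⟨x, hx⟩ : {x // x ∈ s})]
      · simp [w]
      · intro b _ hb
        rw [Pi.single_eq_of_ne hb]
        simp
      · simp
  have hVr : V ≤ LinearMap.range φ := by rw [hrange]; exact hVW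
  obtain ⟨s₂, hs₂c, hs₂⟩ := main_gen hch (Finset.univ : Finset {x // x ∈ s})
    (Submodule.comap φ V) (by rw [deltaSub_univ]; exact le_top)
  have hmap : Submodule.map φ (Submodule.comap φ V) = V :=
    Submodule.map_comap_eq_self hVr
  have hspanV : span Aᵐᵒᵖ (↑(s₂.image φ) : Set (E → A)) = V := by
    rw [Finset.coe_image, span_image, hs₂, hmap]
  calc minGen V ≤ (s₂.image φ).card := minGen_le hspanV
  _ ≤ s₂.card := Finset.card_image_le
  _ ≤ (Finset.univ : Finset {x // x ∈ s}).card := hs₂c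
  _ = s.card := by rw [Finset.card_univ, Fintype.card_coe]
  _ = minGen W := hsc

end MainGen
/-- Proposition 7.4: over a finite chain ring `A` (a finite ring whose left
ideals form a chain), for a right linear code `C ⊆ A^E` with `rank C = t`, the
function `f J = rank (C ∩ δ(J))` is a demi-matroid on `E` with `f E = t`. -/
theorem stmt_19 (A : Type*) [Ring A] [Fintype A]
    (hlocalchain : ∀ I J : Ideal A, I ≤ J ∨ J ≤ I)
    (E : Type*) [Fintype E] [DecidableEq E]
    (C : Submodule Aᵐᵒᵖ (E → A)) (t : ℕ) (ht : minGen C = t)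
    (f : Finset E → ℤ)
    (hf : ∀ J : Finset E, f J = minGen (C ⊓ deltaSub A E J)) :
    f ∅ = 0 ∧ f Finset.univ = t ∧
    ∀ B D : Finset E, B ⊆ D →
      (0 ≤ f D - f B ∧ f D - f B ≤ (D.card : ℤ) - B.card) := by
  classical
  refine ⟨?_, ?_, ?_⟩
  · rw [hf, deltaSub_empty, inf_bot_eq, minGen_bot, Nat.cast_zero]
  · rw [hf, deltaSub_univ, inf_top_eq, ht]
  · intro B D hBD
    have hmono : minGen (C ⊓ deltaSub A E B) ≤ minGen (C ⊓ deltaSub A E D) :=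
      minGen_mono hlocalchain (inf_le_inf_left C (deltaSub_mono hBD))
    set Pr : (E → A) →ₗ[Aᵐᵒᵖ] ({x // x ∈ D \ B} → A) :=
      LinearMap.funLeft Aᵐᵒᵖ A (fun i => ↑i) with hPr
    have hinf : (C ⊓ deltaSub A E D) ⊓ LinearMap.ker Pr = C ⊓ deltaSub A E B := by
      ext α
      simp only [Submodule.mem_inf, LinearMap.mem_ker, mem_deltaSub]
      constructor
      · rintro ⟨⟨hC, hD⟩, hk⟩
        refine ⟨hC, fun i hiB => ?_⟩
        by_cases hiD : i ∈ D
        · exact congrFun hk ⟨i, Finset.mem_sdiff.mpr ⟨hiD, hiB⟩⟩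
        · exact hD i hiD
      · rintro ⟨hC, hB⟩
        refine ⟨⟨hC, fun i hiD => hB i (fun hiB => hiD (hBD hiB))⟩, ?_⟩
        funext j
        exact hB (↑j) (Finset.mem_sdiff.mp j.2).2
    have hbound : minGen ((C ⊓ deltaSub A E D).map Pr) ≤ (D \ B).card := by
      obtain ⟨s, hsc, hs⟩ := main_gen hlocalchain (Finset.univ : Finset {x // x ∈ D \ B})
        ((C ⊓ deltaSub A E D).map Pr) (by rw [deltaSub_univ]; exact le_top)
      calc minGen ((C ⊓ deltaSub A E D).map Pr) ≤ s.card := minGen_le hs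
      _ ≤ (Finset.univ : Finset {x // x ∈ D \ B}).card := hsc
      _ = (D \ B).card := by rw [Finset.card_univ, Fintype.card_coe]
    have hkey := minGen_le_ker_add_map Pr (C ⊓ deltaSub A E D)
    rw [hinf] at hkey
    have hc : (D \ B).card = D.card - B.card := Finset.card_sdiff_of_subset hBD
    have hcard : B.card ≤ D.card := Finset.card_le_card hBD
    rw [hf B, hf D]
    constructor
    · omega
    · omega
end
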